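/- arXiv:2303.02873 — 9 statements merged into one kernel-verified Lean document; each statement's English description precedes it below -/
import Mathlib

section
/- Let m > 1 and Φ_m(t) = exp(((ln t)^{1/m} + 1)^m) for t > 1. Then Φ_m is submultiplicative on (1, ∞): Φ_m(ab) ≤ Φ_m(a) Φ_m(b) for all a, b > 1. -/
open Real

/-- Young-type weighted inequality from convexity of `x ^ m`. -/
lemma young_aux {x y l m : ℝ} (hx : 0 ≤ x) (hy : 0 ≤ y) (hl0 : 0 < l) (hl1 : l < 1)
    (hm : 1 ≤ m) :
    (x + y) ^ m ≤ l ^ (1 - m) * x ^ m + (1 - l) ^ (1 - m) * y ^ m := by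
  have hl1' : 0 < 1 - l := by linarith
  have h := (convexOn_rpow hm).2 (x := x / l) (y := y / (1 - l))
    (Set.mem_Ici.2 (div_nonneg hx hl0.le)) (Set.mem_Ici.2 (div_nonneg hy hl1'.le))
    hl0.le hl1'.le (by ring)
  simp only [smul_eq_mul] at h
  have hxy : l * (x / l) + (1 - l) * (y / (1 - l)) = x + y := by
    field_simp
  rw [hxy] at h
  refine h.trans_eq ?_
  have h1 : (x / l) ^ m = x ^ m / l ^ m := Real.div_rpow hx hl0.le m
  have h2 : (y / (1 - l)) ^ m = y ^ m / (1 - l) ^ m := Real.div_rpow hy hl1'.le m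
  rw [h1, h2]
  have hlm : l ^ (1 - m) = l / l ^ m := by
    rw [Real.rpow_sub hl0, Real.rpow_one]
  have hlm' : (1 - l) ^ (1 - m) = (1 - l) / (1 - l) ^ m := by
    rw [Real.rpow_sub hl1', Real.rpow_one]
  rw [hlm, hlm']
  ring

/-- Core subadditivity: for `s ≥ t > 0` and `m > 1`,
`((s+t)^(1/m)+1)^m ≤ (s^(1/m)+1)^m + (t^(1/m)+1)^m`. -/
lemma core_aux {m s t : ℝ} (hm : 1 < m) (ht : 0 < t) (hts : t ≤ s) :
    ((s + t) ^ (1 / m) + 1) ^ m ≤ (s ^ (1 / m) + 1) ^ m + (t ^ (1 / m) + 1) ^ m := by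
  have hs : 0 < s := ht.trans_le hts
  have hm0 : (0:ℝ) < m := by linarith
  set u := s ^ (1 / m) with hu
  set v := t ^ (1 / m) with hv
  have hu0 : 0 < u := Real.rpow_pos_of_pos hs _
  have hv0 : 0 < v := Real.rpow_pos_of_pos ht _
  have hvu : v ≤ u := Real.rpow_le_rpow ht.le hts (by positivity)
  have hum : u ^ m = s := by
    rw [hu, ← Real.rpow_mul hs.le, one_div, inv_mul_cancel₀ hm0.ne', Real.rpow_one]
  have hvm : v ^ m = t := by
    rw [hv, ← Real.rpow_mul ht.le, one_div, inv_mul_cancel₀ hm0.ne', Real.rpow_one]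
  set A := (s + t) ^ (1 / m) with hA
  have hA0 : 0 < A := Real.rpow_pos_of_pos (by linarith) _
  have hAm : A ^ m = s + t := by
    rw [hA, ← Real.rpow_mul (by linarith), one_div, inv_mul_cancel₀ hm0.ne', Real.rpow_one]
  -- weight
  set l := u / (u + 1) with hl
  have hu1 : 0 < u + 1 := by linarith
  have hv1 : 0 < v + 1 := by linarith
  have hl0 : 0 < l := div_pos hu0 hu1
  have hl1 : l < 1 := (div_lt_one hu1).2 (by linarith)
  have h1l : 1 - l = 1 / (u + 1) := by
    rw [hl]; field_simp; ring
  have hneg : ∀ w : ℝ, 0 ≤ w → w ^ (1 - m) = (w ^ (m - 1))⁻¹ := fun w hw => by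
    rw [← neg_sub m 1, Real.rpow_neg hw]
  have key := young_aux (x := A) (y := 1) hA0.le zero_le_one hl0 hl1 hm.le
  rw [Real.one_rpow, mul_one, hAm] at key
  -- compute l ^ (1 - m) = u ^ (1-m) * (u+1) ^ (m-1)
  have hlpow : l ^ (1 - m) = u ^ (1 - m) * (u + 1) ^ (m - 1) := by
    rw [hl, Real.div_rpow hu0.le hu1.le, div_eq_mul_inv, hneg _ hu1.le, inv_inv]
  have h1lpow : (1 - l) ^ (1 - m) = (u + 1) ^ (m - 1) := by
    rw [h1l, Real.div_rpow zero_le_one hu1.le, Real.one_rpow, one_div,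
      hneg _ hu1.le, inv_inv]
  -- l^(1-m) * u^m = u * (u+1)^(m-1)
  have hterm1 : l ^ (1 - m) * u ^ m = u * (u + 1) ^ (m - 1) := by
    rw [hlpow]
    have : u ^ (1 - m) * u ^ m = u := by
      rw [← Real.rpow_add hu0]; norm_num
    calc u ^ (1 - m) * (u + 1) ^ (m - 1) * u ^ m
        = (u ^ (1 - m) * u ^ m) * (u + 1) ^ (m - 1) := by ring
      _ = u * (u + 1) ^ (m - 1) := by rw [this]
  -- l^(1-m) * v^m ≤ v * (v+1)^(m-1)
  have hterm2 : l ^ (1 - m) * v ^ m ≤ v * (v + 1) ^ (m - 1) := by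
    have hlv : v / (v + 1) ≤ l := by
      rw [hl, div_le_div_iff₀ hv1 hu1]
      nlinarith
    have hmono : l ^ (1 - m) ≤ (v / (v + 1)) ^ (1 - m) :=
      Real.rpow_le_rpow_of_nonpos (div_pos hv0 hv1) hlv (by linarith)
    have heq : (v / (v + 1)) ^ (1 - m) * v ^ m = v * (v + 1) ^ (m - 1) := by
      rw [Real.div_rpow hv0.le hv1.le, div_eq_mul_inv, hneg _ hv1.le, inv_inv]
      have hvv : v ^ (1 - m) * v ^ m = v := by
        rw [← Real.rpow_add hv0]; norm_num
      calc v ^ (1 - m) * (v + 1) ^ (m - 1) * v ^ m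
          = (v ^ (1 - m) * v ^ m) * (v + 1) ^ (m - 1) := by ring
        _ = v * (v + 1) ^ (m - 1) := by rw [hvv]
    calc l ^ (1 - m) * v ^ m ≤ (v / (v + 1)) ^ (1 - m) * v ^ m := by
          apply mul_le_mul_of_nonneg_right hmono (Real.rpow_nonneg hv0.le m)
      _ = v * (v + 1) ^ (m - 1) := heq
  -- assemble
  have hu1m : u * (u + 1) ^ (m - 1) + (u + 1) ^ (m - 1) = (u + 1) ^ m := by
    have : (u + 1) ^ m = (u + 1) ^ (m - 1) * (u + 1) := by
      rw [← Real.rpow_add_one hu1.ne']; ring_nf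
    rw [this]; ring
  have hv1m : v * (v + 1) ^ (m - 1) ≤ (v + 1) ^ m := by
    have : (v + 1) ^ m = (v + 1) ^ (m - 1) * (v + 1) := by
      rw [← Real.rpow_add_one hv1.ne']; ring_nf
    rw [this]
    have hp : (0:ℝ) ≤ (v + 1) ^ (m - 1) := Real.rpow_nonneg hv1.le _
    nlinarith
  have hsplit : l ^ (1 - m) * (s + t) = l ^ (1 - m) * u ^ m + l ^ (1 - m) * v ^ m := by
    rw [← hum, ← hvm]; ring
  calc (A + 1) ^ m ≤ l ^ (1 - m) * (s + t) + (1 - l) ^ (1 - m) := key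
    _ = l ^ (1 - m) * u ^ m + l ^ (1 - m) * v ^ m + (u + 1) ^ (m - 1) := by
        rw [hsplit, h1lpow]
    _ ≤ u * (u + 1) ^ (m - 1) + v * (v + 1) ^ (m - 1) + (u + 1) ^ (m - 1) := by
        rw [hterm1]; linarith
    _ = (u * (u + 1) ^ (m - 1) + (u + 1) ^ (m - 1)) + v * (v + 1) ^ (m - 1) := by ring
    _ ≤ (u + 1) ^ m + (v + 1) ^ m := by rw [hu1m]; linarith

lemma core_aux' {m s t : ℝ} (hm : 1 < m) (hs : 0 < s) (ht : 0 < t) :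
    ((s + t) ^ (1 / m) + 1) ^ m ≤ (s ^ (1 / m) + 1) ^ m + (t ^ (1 / m) + 1) ^ m := by
  rcases le_total t s with h | h
  · exact core_aux hm ht h
  · have := core_aux hm hs h
    rw [add_comm t s] at this
    linarith

/-- For m > 1, Φ_m(t) = exp(((ln t)^{1/m}+1)^m) is submultiplicative on (1,∞). -/
theorem phi_submultiplicative (m : ℝ) (hm : 1 < m) (a b : ℝ) (ha : 1 < a) (hb : 1 < b) :
    Real.exp ((Real.log (a * b) ^ (1 / m) + 1) ^ m) ≤
      Real.exp ((Real.log a ^ (1 / m) + 1) ^ m) *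
        Real.exp ((Real.log b ^ (1 / m) + 1) ^ m) := by
  rw [← Real.exp_add, Real.exp_le_exp,
    Real.log_mul (by linarith) (by linarith)]
  exact core_aux' hm (Real.log_pos ha) (Real.log_pos hb)
end

section
/- Let Φ be a Young function (increasing, convex, Φ(0)=0) that is K-submultiplicative for K ≥ 1, and let (X, μ) be a measure space. Define the nonhomogeneous quasi-norm ‖f‖_{D^Φ(μ)} = Φ^{-1}(∫_X Φ(|f|) dμ) for measurable f with finite integral. Then for all such f, g: ‖f+g‖_{D^Φ(μ)} ≤ 2KΦ(2) (‖f‖_{D^Φ(μ)} + ‖g‖_{D^Φ(μ)}). -/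
open MeasureTheory

/-- The nonhomogeneous quantity ‖f‖ = Φ⁻¹(∫ Φ(|f|) dμ) is a quasi-norm: it satisfies a
quasi-triangle inequality with constant 2KΦ(2), where Φ is a K-submultiplicative Young
function with inverse Ψ on [0,∞). -/
theorem quasinorm_triangle {X : Type*} [MeasurableSpace X] (μ : Measure X)
    (Φ Ψ : ℝ → ℝ) (K : ℝ) (hK : 1 ≤ K)
    (hΦ0 : Φ 0 = 0)
    (hsm : StrictMonoOn Φ (Set.Ici 0))
    (hconv : ConvexOn ℝ (Set.Ici 0) Φ)
    (hΦnn : ∀ t : ℝ, 0 ≤ t → 0 ≤ Φ t)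
    (hsurj : ∀ s : ℝ, 0 ≤ s → ∃ t : ℝ, 0 ≤ t ∧ Φ t = s)
    (hΨ : ∀ t : ℝ, 0 ≤ t → Ψ (Φ t) = t)
    (hΨmono : MonotoneOn Ψ (Set.Ici 0))
    (hsub : ∀ s t : ℝ, 0 ≤ s → 0 ≤ t → Φ (s * t) ≤ K * Φ s * Φ t)
    (f g : X → ℝ)
    (hf : Integrable (fun x => Φ |f x|) μ)
    (hg : Integrable (fun x => Φ |g x|) μ)
    (hfg : Integrable (fun x => Φ |f x + g x|) μ) :
    Ψ (∫ x, Φ |f x + g x| ∂μ) ≤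
      2 * K * Φ 2 * (Ψ (∫ x, Φ |f x| ∂μ) + Ψ (∫ x, Φ |g x| ∂μ)) := by
  have hmono : MonotoneOn Φ (Set.Ici 0) := hsm.monotoneOn
  have hΦ1 : 0 < Φ 1 := by
    have := hsm (Set.mem_Ici.2 le_rfl) (Set.mem_Ici.2 zero_le_one) zero_lt_one
    simpa [hΦ0] using this
  have hΦ12 : Φ 1 ≤ Φ 2 := hmono (Set.mem_Ici.2 zero_le_one) (Set.mem_Ici.2 (by norm_num))
    (by norm_num)
  have hKΦ1 : 1 ≤ K * Φ 1 := by
    have h := hsub 1 1 zero_le_one zero_le_one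
    rw [one_mul] at h
    nlinarith [hΦ1]
  have hC : 1 ≤ K * Φ 2 := by nlinarith [hΦ1]
  set C := K * Φ 2 with hCdef
  have hC0 : 0 < C := lt_of_lt_of_le zero_lt_one hC
  -- scaling: c ≥ 1, t ≥ 0 → c * Φ t ≤ Φ (c * t)
  have hscale : ∀ c t : ℝ, 1 ≤ c → 0 ≤ t → c * Φ t ≤ Φ (c * t) := by
    intro c t hc ht
    have hc0 : 0 < c := lt_of_lt_of_le zero_lt_one hc
    have h1 : (1 / c) • (c * t) + (1 - 1 / c) • (0 : ℝ) = t := by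
      rw [smul_eq_mul, smul_eq_mul, mul_zero, add_zero]
      field_simp
    have hcv := hconv.2
    have h2 := hcv (x := c * t) (y := 0) (a := 1 / c) (b := 1 - 1 / c)
      (Set.mem_Ici.2 (by positivity)) (Set.mem_Ici.2 le_rfl)
      (by positivity)
      (by rw [sub_nonneg]; exact div_le_one_of_le₀ hc (le_of_lt hc0))
      (by ring)
    rw [h1] at h2
    simp only [smul_eq_mul, hΦ0, mul_zero, add_zero] at h2
    calc c * Φ t ≤ c * (1 / c * Φ (c * t)) := by
          exact mul_le_mul_of_nonneg_left h2 (le_of_lt hc0)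
      _ = Φ (c * t) := by field_simp
  -- superadditivity
  have hsuper : ∀ a b : ℝ, 0 ≤ a → 0 ≤ b → Φ a + Φ b ≤ Φ (a + b) := by
    intro a b ha hb
    rcases eq_or_lt_of_le (by positivity : (0:ℝ) ≤ a + b) with h | h
    · have ha0 : a = 0 := by linarith
      have hb0 : b = 0 := by linarith
      simp [ha0, hb0, hΦ0]
    · have key : ∀ u : ℝ, 0 ≤ u → u ≤ a + b → Φ u ≤ u / (a + b) * Φ (a + b) := by
        intro u hu hule
        have hcv := hconv.2
        have h2 := hcv (x := a + b) (y := 0) (a := u / (a + b))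
          (b := 1 - u / (a + b))
          (Set.mem_Ici.2 (le_of_lt h)) (Set.mem_Ici.2 le_rfl)
          (by positivity)
          (by rw [sub_nonneg]; exact div_le_one_of_le₀ hule (le_of_lt h))
          (by ring)
        have h1 : (u / (a + b)) • (a + b) + (1 - u / (a + b)) • (0 : ℝ) = u := by
          rw [smul_eq_mul, smul_eq_mul, mul_zero, add_zero]
          exact div_mul_cancel₀ u (ne_of_gt h)
        rw [h1] at h2
        simpa [hΦ0] using h2
      have hA := key a ha (by linarith)
      have hB := key b hb (by linarith)
      have : Φ a + Φ b ≤ (a / (a + b) + b / (a + b)) * Φ (a + b) := by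
        rw [add_mul]; exact add_le_add hA hB
      rwa [← add_div, div_self (ne_of_gt h), one_mul] at this
  -- pointwise bound
  have hpt : ∀ x, Φ |f x + g x| ≤ C * (Φ |f x| + Φ |g x|) := by
    intro x
    set m := max |f x| |g x| with hm
    have hm0 : 0 ≤ m := le_trans (abs_nonneg _) (le_max_left _ _)
    have h1 : |f x + g x| ≤ 2 * m := by
      calc |f x + g x| ≤ |f x| + |g x| := abs_add_le _ _
        _ ≤ 2 * m := by
            have := le_max_left |f x| |g x|
            have := le_max_right |f x| |g x|
            linarith
    have h2 : Φ |f x + g x| ≤ Φ (2 * m) :=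
      hmono (Set.mem_Ici.2 (abs_nonneg _)) (Set.mem_Ici.2 (by positivity)) h1
    have h3 : Φ (2 * m) ≤ K * Φ 2 * Φ m := hsub 2 m (by norm_num) hm0
    have h4 : Φ m ≤ Φ |f x| + Φ |g x| := by
      rcases max_cases |f x| |g x| with ⟨he, _⟩ | ⟨he, _⟩ <;> rw [hm, he]
      · linarith [hΦnn |g x| (abs_nonneg _)]
      · linarith [hΦnn |f x| (abs_nonneg _)]
    calc Φ |f x + g x| ≤ K * Φ 2 * Φ m := le_trans h2 h3
      _ ≤ C * (Φ |f x| + Φ |g x|) :=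
          mul_le_mul_of_nonneg_left h4 (le_of_lt hC0)
  -- integral bound
  have hint : ∫ x, Φ |f x + g x| ∂μ ≤ C * ((∫ x, Φ |f x| ∂μ) + ∫ x, Φ |g x| ∂μ) := by
    calc ∫ x, Φ |f x + g x| ∂μ ≤ ∫ x, C * (Φ |f x| + Φ |g x|) ∂μ :=
          integral_mono hfg (((hf.add hg).const_mul C)) hpt
      _ = C * ((∫ x, Φ |f x| ∂μ) + ∫ x, Φ |g x| ∂μ) := by
          rw [integral_const_mul, integral_add hf hg]
  set A := ∫ x, Φ |f x| ∂μ with hA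
  set B := ∫ x, Φ |g x| ∂μ with hB
  have hA0 : 0 ≤ A := integral_nonneg fun x => hΦnn _ (abs_nonneg _)
  have hB0 : 0 ≤ B := integral_nonneg fun x => hΦnn _ (abs_nonneg _)
  obtain ⟨a, ha0, haΦ⟩ := hsurj A hA0
  obtain ⟨b, hb0, hbΦ⟩ := hsurj B hB0
  have hΨA : Ψ A = a := by rw [← haΦ, hΨ a ha0]
  have hΨB : Ψ B = b := by rw [← hbΦ, hΨ b hb0]
  have hab0 : 0 ≤ a + b := by linarith
  have key : ∫ x, Φ |f x + g x| ∂μ ≤ Φ (2 * C * (a + b)) := by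
    calc ∫ x, Φ |f x + g x| ∂μ ≤ C * (A + B) := hint
      _ = C * (Φ a + Φ b) := by rw [haΦ, hbΦ]
      _ ≤ C * Φ (a + b) :=
          mul_le_mul_of_nonneg_left (hsuper a b ha0 hb0) (le_of_lt hC0)
      _ ≤ Φ (C * (a + b)) := hscale C (a + b) hC hab0
      _ ≤ Φ (2 * C * (a + b)) := by
          apply hmono (Set.mem_Ici.2 (by positivity)) (Set.mem_Ici.2 (by positivity))
          nlinarith
  have hle : Ψ (∫ x, Φ |f x + g x| ∂μ) ≤ Ψ (Φ (2 * C * (a + b))) :=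
    hΨmono (Set.mem_Ici.2 (integral_nonneg fun x => hΦnn _ (abs_nonneg _)))
      (Set.mem_Ici.2 (hΦnn _ (by positivity))) key
  rw [hΨ (2 * C * (a + b)) (by positivity)] at hle
  rw [hΨA, hΨB]
  calc Ψ (∫ x, Φ |f x + g x| ∂μ) ≤ 2 * C * (a + b) := hle
    _ = 2 * K * Φ 2 * (a + b) := by rw [hCdef]; ring
end

section
/- Let Φ be a Young function that is K-supermultiplicative for some K ≥ 1 (i.e., K Φ(st) ≥ Φ(s)Φ(t) for all s, t ≥ 0), and let μ be a probability measure on B. For any nonnegative measurable v on B, ‖v‖_{L^Φ(μ)} ≤ K Φ^{-1}(∫_B Φ(v) dμ). -/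
open MeasureTheory

/-- The Luxemburg norm of v: inf { t > 0 : ∫ Φ(|v|/t) dμ ≤ 1 }, with inf ∅ = ∞. -/
noncomputable def luxemburgNorm {X : Type*} [MeasurableSpace X] (μ : Measure X)
    (Φ : ℝ → ℝ) (v : X → ℝ) : ENNReal :=
  sInf {t : ENNReal | 0 < t ∧ t ≠ ⊤ ∧ ∫ x, Φ (|v x| / t.toReal) ∂μ ≤ 1}

/-- If Φ is a K-supermultiplicative Young function and μ a probability measure, then
‖v‖_{L^Φ(μ)} ≤ K Φ⁻¹(∫ Φ(v) dμ). -/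
theorem luxemburg_le_quasinorm {X : Type*} [MeasurableSpace X] (μ : Measure X)
    [IsProbabilityMeasure μ]
    (Φ Ψ : ℝ → ℝ) (K : ℝ) (hK : 1 ≤ K)
    (hΦ0 : Φ 0 = 0)
    (hsm : StrictMonoOn Φ (Set.Ici 0))
    (hconv : ConvexOn ℝ (Set.Ici 0) Φ)
    (hΦnn : ∀ t : ℝ, 0 ≤ t → 0 ≤ Φ t)
    (hsurj : ∀ s : ℝ, 0 ≤ s → ∃ t : ℝ, 0 ≤ t ∧ Φ t = s)
    (hΨ : ∀ t : ℝ, 0 ≤ t → Ψ (Φ t) = t)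
    (hsuper : ∀ s t : ℝ, 0 ≤ s → 0 ≤ t → Φ s * Φ t ≤ K * Φ (s * t))
    (v : X → ℝ) (hv : Measurable v) (hvnn : ∀ x, 0 ≤ v x) :
    luxemburgNorm μ Φ v ≤ ENNReal.ofReal (K * Ψ (∫ x, Φ (v x) ∂μ)) := by
  classical
  have habs : ∀ x, |v x| = v x := fun x => abs_of_nonneg (hvnn x)
  have hKpos : (0:ℝ) < K := lt_of_lt_of_le one_pos hK
  set Φ' : ℝ → ℝ := fun t => Φ (max t 0) with hΦ'def
  have hΦ'mono : Monotone Φ' := fun a b hab =>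
    hsm.monotoneOn (Set.mem_Ici.2 (le_max_right a 0)) (Set.mem_Ici.2 (le_max_right b 0))
      (max_le_max hab le_rfl)
  have hΦ'meas : Measurable Φ' := hΦ'mono.measurable
  have hΦ'eq : ∀ t : ℝ, 0 ≤ t → Φ' t = Φ t := fun t ht => by
    simp [hΦ'def, max_eq_left ht]
  have hmeas : ∀ c : ℝ, 0 < c → AEStronglyMeasurable (fun x => Φ (v x / c)) μ := by
    intro c hc
    have heq : (fun x => Φ (v x / c)) = fun x => Φ' (v x / c) := by
      funext x; rw [hΦ'eq _ (div_nonneg (hvnn x) hc.le)]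
    rw [heq]
    exact (hΦ'meas.comp (hv.div_const c)).aestronglyMeasurable
  -- a helper: if all small t are admissible, the norm is 0 hence ≤ anything
  have hzero_case : (∀ t : ℝ, 0 < t → t ≤ 1 → (∫ x, Φ (|v x| / t) ∂μ) ≤ 1) →
      luxemburgNorm μ Φ v = 0 := by
    intro h
    refine le_antisymm ?_ zero_le
    refine ENNReal.le_of_forall_pos_le_add (fun ε hε _ => ?_)
    rw [zero_add]
    have htpos : (0:ℝ) < min (ε:ℝ) 1 := lt_min (by exact_mod_cast hε) one_pos
    have hmem : ENNReal.ofReal (min (ε:ℝ) 1) ∈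
        {t : ENNReal | 0 < t ∧ t ≠ ⊤ ∧ ∫ x, Φ (|v x| / t.toReal) ∂μ ≤ 1} := by
      refine ⟨ENNReal.ofReal_pos.2 htpos, ENNReal.ofReal_ne_top, ?_⟩
      rw [ENNReal.toReal_ofReal htpos.le]
      exact h _ htpos (min_le_right _ _)
    calc luxemburgNorm μ Φ v ≤ ENNReal.ofReal (min (ε:ℝ) 1) := sInf_le hmem
      _ ≤ ENNReal.ofReal (ε:ℝ) := ENNReal.ofReal_le_ofReal (min_le_left _ _)
      _ = (ε : ENNReal) := ENNReal.ofReal_coe_nnreal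
  by_cases hI : Integrable (fun x => Φ (v x)) μ
  · set I := ∫ x, Φ (v x) ∂μ with hIdef
    have hInn : 0 ≤ I := integral_nonneg fun x => hΦnn _ (hvnn x)
    rcases eq_or_lt_of_le hInn with hI0 | hIpos
    · -- I = 0 : v = 0 a.e.
      have hv0 : ∀ᵐ x ∂μ, Φ (v x) = 0 := by
        have := (integral_eq_zero_iff_of_nonneg (fun x => hΦnn _ (hvnn x)) hI).1 hI0.symm
        filter_upwards [this] with x hx using hx
      have hv0' : ∀ᵐ x ∂μ, v x = 0 := by
        filter_upwards [hv0] with x hx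
        by_contra hne
        have hpos : 0 < v x := lt_of_le_of_ne (hvnn x) (Ne.symm hne)
        have := hsm (Set.mem_Ici.2 le_rfl) (Set.mem_Ici.2 (hvnn x)) hpos
        rw [hΦ0, hx] at this
        exact lt_irrefl 0 this
      rw [hzero_case ?_]
      · exact zero_le
      · intro t ht ht1
        have : (∫ x, Φ (|v x| / t) ∂μ) = 0 := by
          rw [integral_eq_zero_iff_of_nonneg]
          · filter_upwards [hv0'] with x hx
            simp [hx, abs_of_nonneg, hΦ0]
          · exact fun x => hΦnn _ (div_nonneg (abs_nonneg _) ht.le)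
          · refine Integrable.congr (integrable_zero _ _ _) ?_
            filter_upwards [hv0'] with x hx
            simp [hx, hΦ0]
        rw [this]; exact zero_le_one
    · obtain ⟨s, hs0, hsΦ⟩ := hsurj I hInn
      have hspos : 0 < s := by
        rcases hs0.lt_or_eq with h | h
        · exact h
        · exfalso; rw [← h, hΦ0] at hsΦ; linarith
      have hΨI : Ψ I = s := by rw [← hsΦ, hΨ s hs0]
      rw [hΨI]
      set t₀ := K * s with ht₀def
      have ht₀pos : 0 < t₀ := mul_pos hKpos hspos
      apply sInf_le
      refine ⟨ENNReal.ofReal_pos.2 ht₀pos, ENNReal.ofReal_ne_top, ?_⟩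
      rw [ENNReal.toReal_ofReal ht₀pos.le]
      have hpt : ∀ x, Φ (|v x| / t₀) ≤ Φ (v x) / I := by
        intro x
        rw [habs x]
        have hvx := hvnn x
        have ha : 0 ≤ v x / t₀ := div_nonneg hvx ht₀pos.le
        have hsuper' := hsuper (v x / t₀) s ha hs0
        have hmul : v x / t₀ * s = v x / K := by
          rw [ht₀def]; field_simp
        rw [hmul, hsΦ] at hsuper'
        have hconvK : Φ (v x / K) ≤ Φ (v x) / K := by
          have h1 : (0:ℝ) ≤ 1/K := by positivity
          have h2 : (0:ℝ) ≤ 1 - 1/K := by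
            have : 1/K ≤ 1 := (div_le_one hKpos).2 hK
            linarith
          have h3 := hconv.2 (Set.mem_Ici.2 hvx) (Set.mem_Ici.2 (le_refl (0:ℝ))) h1 h2
            (by ring)
          simp only [smul_eq_mul, mul_zero, add_zero, hΦ0] at h3
          calc Φ (v x / K) = Φ (1/K * v x) := by rw [one_div, inv_mul_eq_div]
            _ ≤ 1/K * Φ (v x) := h3
            _ = Φ (v x) / K := by ring
        have hcomb : Φ (v x / t₀) * I ≤ Φ (v x) := by
          calc Φ (v x / t₀) * I ≤ K * Φ (v x / K) := hsuper'
            _ ≤ K * (Φ (v x) / K) := by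
                exact mul_le_mul_of_nonneg_left hconvK hKpos.le
            _ = Φ (v x) := by field_simp
        exact (le_div_iff₀ hIpos).2 hcomb
      have hmeas' : AEStronglyMeasurable (fun x => Φ (|v x| / t₀)) μ := by
        have : (fun x => Φ (|v x| / t₀)) = fun x => Φ (v x / t₀) := by
          funext x; rw [habs]
        rw [this]; exact hmeas t₀ ht₀pos
      have hint : Integrable (fun x => Φ (|v x| / t₀)) μ := by
        refine Integrable.mono' (hI.div_const I) hmeas' ?_
        filter_upwards with x
        rw [Real.norm_eq_abs, abs_of_nonneg (hΦnn _ (div_nonneg (abs_nonneg _) ht₀pos.le))]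
        exact hpt x
      calc ∫ x, Φ (|v x| / t₀) ∂μ ≤ ∫ x, Φ (v x) / I ∂μ :=
            integral_mono hint (hI.div_const I) hpt
        _ = I / I := by rw [integral_div]
        _ = 1 := div_self hIpos.ne'
  · -- Φ ∘ v not integrable: norm is 0
    rw [hzero_case ?_]
    · exact zero_le
    · intro t ht ht1
      have hnotint : ¬ Integrable (fun x => Φ (|v x| / t)) μ := by
        intro hcon
        apply hI
        refine Integrable.mono' hcon ((hmeas 1 one_pos).congr ?_) ?_
        · filter_upwards with x; simp
        · filter_upwards with x
          rw [Real.norm_eq_abs, abs_of_nonneg (hΦnn _ (hvnn x)), habs]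
          refine hsm.monotoneOn (Set.mem_Ici.2 (hvnn x))
            (Set.mem_Ici.2 (div_nonneg (hvnn x) ht.le)) ?_
          rw [le_div_iff₀ ht]
          nlinarith [hvnn x]
      rw [integral_undef hnotint]
      exact zero_le_one
end

section
/- Fix m > 2, K > 1, γ > 0. Let Φ(t) = exp(((ln t)^{1/m} + 1)^m) for t ≥ e^{2^m}. Define a sequence by b_1 ≥ e^{2^m} and b_{n+1} = Φ(K n^γ b_n). Then there exists a constant C* = exp(((ln b_1)^{1/m} + C_m(γ + ln K))^m), where C_m depends only on m, such that Φ^{(n-1)}(C*) ≥ b_n for every positive integer n, where Φ^{(j)} denotes the j-fold composition of Φ. -/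
/-- The Young function Φ_m(t) = exp(((ln t)^{1/m}+1)^m). -/
noncomputable def PhiM (m : ℝ) (t : ℝ) : ℝ :=
  Real.exp ((Real.log t ^ (1 / m) + 1) ^ m)

lemma phiM_exp (m : ℝ) (hm : m ≠ 0) (a : ℝ) (ha : 0 ≤ a) :
    PhiM m (Real.exp (a ^ m)) = Real.exp ((a + 1) ^ m) := by
  unfold PhiM
  rw [Real.log_exp]
  congr 2
  rw [← Real.rpow_mul ha, mul_one_div_cancel hm, Real.rpow_one]

lemma iterPhiM (m : ℝ) (hm : m ≠ 0) : ∀ (k : ℕ) (a : ℝ), 0 ≤ a →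
    (PhiM m)^[k] (Real.exp (a ^ m)) = Real.exp ((a + k) ^ m)
  | 0, a, _ => by simp
  | (k+1), a, ha => by
    rw [Function.iterate_succ_apply, phiM_exp m hm a ha,
      iterPhiM m hm k (a + 1) (by linarith)]
    push_cast
    ring_nf

set_option maxHeartbeats 2000000 in
/-- Moser recurrence lemma: for m > 2, K > 1, γ > 0 and b₁ ≥ e^{2^m}, if
b_{n+1} = Φ(K n^γ b_n) then Φ^{(n-1)}(C*) ≥ b_n for all n ≥ 1, where
C* = exp(((ln b₁)^{1/m} + C_m (γ + ln K))^m) and C_m depends only on m. -/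
theorem moser_recurrence (m : ℝ) (hm : 2 < m) :
    ∃ Cm : ℝ, 0 < Cm ∧
      ∀ (K γ : ℝ), 1 < K → 0 < γ →
        ∀ b : ℕ → ℝ, Real.exp ((2 : ℝ) ^ m) ≤ b 1 →
          (∀ n : ℕ, 1 ≤ n → b (n + 1) = PhiM m (K * (n : ℝ) ^ γ * b n)) →
          ∀ n : ℕ, 1 ≤ n →
            b n ≤ (PhiM m)^[n - 1]
              (Real.exp ((Real.log (b 1) ^ (1 / m) + Cm * (γ + Real.log K)) ^ m)) := by
  have hm0 : (0:ℝ) < m := by linarith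
  have hmne : m ≠ 0 := ne_of_gt hm0
  set s : ℝ := (m - 2) / 2 with hs_def
  have hs : 0 < s := by rw [hs_def]; linarith
  refine ⟨(1 + 1/s) / (m * s), by positivity, ?_⟩
  intro K γ hK hγ b hb1 hrec
  set Cm : ℝ := (1 + 1/s) / (m * s) with hCm_def
  have hCm : 0 < Cm := by positivity
  have hmsCm : m * s * Cm = 1 + 1/s := by
    rw [hCm_def]; field_simp
  set G : ℝ := γ + Real.log K with hG_def
  have hlogK : 0 < Real.log K := Real.log_pos hK
  have hG : 0 < G := by rw [hG_def]; linarith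
  set β1 : ℝ := Real.log (b 1) ^ (1 / m) with hβ1_def
  have hb1pos : 0 < b 1 := lt_of_lt_of_le (Real.exp_pos _) hb1
  have hlb1 : (2:ℝ) ^ m ≤ Real.log (b 1) := by
    have := Real.log_le_log (Real.exp_pos _) hb1
    rwa [Real.log_exp] at this
  have h2m : (0:ℝ) ≤ (2:ℝ) ^ m := Real.rpow_nonneg (by norm_num) m
  have hlogb1_nonneg : 0 ≤ Real.log (b 1) := le_trans h2m hlb1
  have hβ1ge : (2:ℝ) ≤ β1 := by
    have h1 : ((2:ℝ) ^ m) ^ (1/m) = 2 := by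
      rw [← Real.rpow_mul (by norm_num), mul_one_div_cancel hmne, Real.rpow_one]
    calc (2:ℝ) = ((2:ℝ) ^ m) ^ (1/m) := h1.symm
      _ ≤ β1 := Real.rpow_le_rpow h2m hlb1 (by positivity)
  -- main induction
  have key : ∀ n : ℕ, 1 ≤ n → 0 < b n ∧ 0 ≤ Real.log (b n) ∧
      Real.log (b n) ≤ (β1 + Cm * G * (1 - (n:ℝ) ^ (-s)) + ((n:ℝ) - 1)) ^ m := by
    intro n hn
    induction n, hn using Nat.le_induction with
    | base =>
      refine ⟨hb1pos, hlogb1_nonneg, le_of_eq ?_⟩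
      rw [Nat.cast_one, Real.one_rpow]
      rw [show β1 + Cm * G * (1 - 1) + ((1:ℝ) - 1) = β1 by ring, hβ1_def,
        ← Real.rpow_mul hlogb1_nonneg, one_div_mul_cancel hmne, Real.rpow_one]
    | succ n hn ih =>
      obtain ⟨hpos, h0, h1⟩ := ih
      have hnR : (1:ℝ) ≤ (n:ℝ) := by exact_mod_cast hn
      have hn0 : (0:ℝ) < (n:ℝ) := by linarith
      have hn1pos : (0:ℝ) < (n:ℝ) + 1 := by linarith
      set y : ℝ := Real.log K + γ * Real.log n + Real.log (b n) with hy_def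
      have hlogprod : Real.log (K * (n:ℝ) ^ γ * b n) = y := by
        rw [Real.log_mul (by positivity) (ne_of_gt hpos),
          Real.log_mul (by positivity) (by positivity), Real.log_rpow hn0, hy_def]
      have hlogn : 0 ≤ Real.log n := Real.log_nonneg hnR
      have hyn : 0 ≤ y := by
        rw [hy_def]
        have : 0 ≤ γ * Real.log n := by positivity
        linarith
      have hbn1 : b (n+1) = Real.exp ((y ^ (1/m) + 1) ^ m) := by
        rw [hrec n hn]; unfold PhiM; rw [hlogprod]
      have hbase_nonneg : 0 ≤ y ^ (1/m) + 1 := by positivity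
      have hlogbn1 : Real.log (b (n+1)) = (y ^ (1/m) + 1) ^ m := by
        rw [hbn1, Real.log_exp]
      refine ⟨by rw [hbn1]; exact Real.exp_pos _,
        by rw [hlogbn1]; exact Real.rpow_nonneg hbase_nonneg m, ?_⟩
      set u : ℝ := β1 + Cm * G * (1 - (n:ℝ) ^ (-s)) + ((n:ℝ) - 1) with hu_def
      set δ : ℝ := Cm * G * ((n:ℝ) ^ (-s) - ((n:ℝ) + 1) ^ (-s)) with hδ_def
      -- u ≥ n + 1
      have hns_le_one : (n:ℝ) ^ (-s) ≤ 1 :=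
        Real.rpow_le_one_of_one_le_of_nonpos hnR (by linarith)
      have hns_nonneg : 0 ≤ (n:ℝ) ^ (-s) := Real.rpow_nonneg hn0.le _
      have hCmG1 : 0 ≤ Cm * G * (1 - (n:ℝ) ^ (-s)) :=
        mul_nonneg (by positivity) (by linarith)
      have hu_ge : (n:ℝ) + 1 ≤ u := by rw [hu_def]; linarith
      have hu_pos : 0 < u := by linarith
      -- δ ≥ s * Cm * G * (n+1)^(-(s+1))
      have hlog_frac : (1:ℝ) / ((n:ℝ) + 1) ≤ Real.log (((n:ℝ) + 1) / n) := by
        have h := Real.log_le_sub_one_of_pos (x := (n:ℝ) / ((n:ℝ) + 1)) (by positivity)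
        rw [Real.log_div (ne_of_gt hn0) (ne_of_gt hn1pos)] at h
        rw [Real.log_div (ne_of_gt hn1pos) (ne_of_gt hn0)]
        have hfrac : (n:ℝ) / ((n:ℝ) + 1) - 1 = -(1 / ((n:ℝ) + 1)) := by
          field_simp
          ring
        rw [hfrac] at h
        linarith
      have hratio : 1 + s / ((n:ℝ) + 1) ≤ (((n:ℝ) + 1) / n) ^ s := by
        rw [Real.rpow_def_of_pos (by positivity)]
        calc 1 + s / ((n:ℝ) + 1) = s * (1 / ((n:ℝ) + 1)) + 1 := by ring
          _ ≤ s * Real.log (((n:ℝ) + 1) / n) + 1 := by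
              have := mul_le_mul_of_nonneg_left hlog_frac hs.le
              linarith
          _ ≤ Real.exp (s * Real.log (((n:ℝ) + 1) / n)) := Real.add_one_le_exp _
          _ = Real.exp (Real.log (((n:ℝ) + 1) / n) * s) := by rw [mul_comm]
      have hsplit : ((n:ℝ)) ^ (-s) = (((n:ℝ) + 1) / n) ^ s * ((n:ℝ) + 1) ^ (-s) := by
        rw [Real.div_rpow hn1pos.le hn0.le, Real.rpow_neg hn0.le, Real.rpow_neg hn1pos.le]
        have h1 : ((n:ℝ)) ^ s ≠ 0 := by positivity
        have h2 : ((n:ℝ) + 1) ^ s ≠ 0 := by positivity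
        field_simp
      have hsexp : ((n:ℝ) + 1) ^ (-(s+1)) = ((n:ℝ) + 1) ^ (-s) * (1 / ((n:ℝ) + 1)) := by
        rw [show -(s+1) = -s + (-1) by ring, Real.rpow_add hn1pos, Real.rpow_neg_one,
          one_div]
      have hdiff : s * ((n:ℝ) + 1) ^ (-(s+1)) ≤ (n:ℝ) ^ (-s) - ((n:ℝ) + 1) ^ (-s) := by
        have hns1_nonneg : 0 ≤ ((n:ℝ) + 1) ^ (-s) := Real.rpow_nonneg hn1pos.le _
        calc s * ((n:ℝ) + 1) ^ (-(s+1))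
            = ((n:ℝ) + 1) ^ (-s) * (1 + s / ((n:ℝ) + 1)) - ((n:ℝ) + 1) ^ (-s) := by
              rw [hsexp]; field_simp; ring
          _ ≤ ((n:ℝ) + 1) ^ (-s) * ((((n:ℝ) + 1) / n) ^ s) - ((n:ℝ) + 1) ^ (-s) := by
              have := mul_le_mul_of_nonneg_left hratio hns1_nonneg
              linarith
          _ = (n:ℝ) ^ (-s) - ((n:ℝ) + 1) ^ (-s) := by rw [hsplit]; ring
      have hδ_ge : s * Cm * G * ((n:ℝ) + 1) ^ (-(s+1)) ≤ δ := by
        rw [hδ_def]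
        calc s * Cm * G * ((n:ℝ) + 1) ^ (-(s+1))
            = Cm * G * (s * ((n:ℝ) + 1) ^ (-(s+1))) := by ring
          _ ≤ Cm * G * ((n:ℝ) ^ (-s) - ((n:ℝ) + 1) ^ (-s)) :=
              mul_le_mul_of_nonneg_left hdiff (by positivity)
      have hδ0 : 0 ≤ δ := le_trans (by positivity) hδ_ge
      -- L_n ≤ G (1 + log(n+1))
      have hLn : Real.log K + γ * Real.log n ≤ G * (1 + Real.log ((n:ℝ) + 1)) := by
        have hlog_mono : Real.log (n:ℝ) ≤ Real.log ((n:ℝ) + 1) :=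
          Real.log_le_log hn0 (by linarith)
        have hlogn1 : 0 ≤ Real.log ((n:ℝ) + 1) := le_trans hlogn hlog_mono
        have h1 : γ * Real.log n ≤ G * Real.log ((n:ℝ) + 1) := by
          calc γ * Real.log n ≤ γ * Real.log ((n:ℝ) + 1) :=
                mul_le_mul_of_nonneg_left hlog_mono hγ.le
            _ ≤ G * Real.log ((n:ℝ) + 1) := by
                apply mul_le_mul_of_nonneg_right _ hlogn1
                rw [hG_def]; linarith
        have h2 : Real.log K ≤ G := by rw [hG_def]; linarith
        calc Real.log K + γ * Real.log n ≤ G + G * Real.log ((n:ℝ) + 1) := by linarith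
          _ = G * (1 + Real.log ((n:ℝ) + 1)) := by ring
      -- 1 + log(n+1) ≤ (1 + 1/s) (n+1)^s
      have hlog_bound : 1 + Real.log ((n:ℝ) + 1) ≤ (1 + 1/s) * ((n:ℝ) + 1) ^ s := by
        have h1 : s * Real.log ((n:ℝ) + 1) ≤ ((n:ℝ) + 1) ^ s - 1 := by
          have h := Real.log_le_sub_one_of_pos (x := ((n:ℝ) + 1) ^ s) (by positivity)
          rwa [Real.log_rpow hn1pos] at h
        have h2 : (1:ℝ) ≤ ((n:ℝ) + 1) ^ s := Real.one_le_rpow (by linarith) hs.le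
        have ht : (0:ℝ) < 1/s := by positivity
        have h4 : Real.log ((n:ℝ) + 1) ≤ (1/s) * ((n:ℝ) + 1) ^ s - 1/s := by
          have h5 := mul_le_mul_of_nonneg_left h1 ht.le
          rw [← mul_assoc, one_div_mul_cancel (ne_of_gt hs), one_mul] at h5
          linarith [h5]
        linarith [h2, ht, h4]
      -- exponent identity
      have hexp_id : ((n:ℝ) + 1) ^ (m - 1) * ((n:ℝ) + 1) ^ (-(s+1)) = ((n:ℝ) + 1) ^ s := by
        rw [← Real.rpow_add hn1pos]
        congr 1
        rw [hs_def]; ring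
      have hum1 : ((n:ℝ) + 1) ^ (m - 1) ≤ u ^ (m - 1) :=
        Real.rpow_le_rpow (by positivity) hu_ge (by linarith)
      -- main inequality: L_n ≤ m u^{m-1} δ
      have hmain : Real.log K + γ * Real.log n ≤ m * u ^ (m - 1) * δ := by
        have step1 : G * (1 + Real.log ((n:ℝ) + 1)) ≤ G * ((1 + 1/s) * ((n:ℝ) + 1) ^ s) :=
          mul_le_mul_of_nonneg_left hlog_bound hG.le
        have step2 : G * ((1 + 1/s) * ((n:ℝ) + 1) ^ s)
            = m * ((n:ℝ) + 1) ^ (m - 1) * (s * Cm * G * ((n:ℝ) + 1) ^ (-(s+1))) := by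
          rw [← hmsCm, ← hexp_id]; ring
        have step3 : m * ((n:ℝ) + 1) ^ (m - 1) * (s * Cm * G * ((n:ℝ) + 1) ^ (-(s+1)))
            ≤ m * u ^ (m - 1) * δ := by
          have hA : 0 ≤ s * Cm * G * ((n:ℝ) + 1) ^ (-(s+1)) := by positivity
          have hB : 0 ≤ m * ((n:ℝ) + 1) ^ (m - 1) := by positivity
          calc m * ((n:ℝ) + 1) ^ (m - 1) * (s * Cm * G * ((n:ℝ) + 1) ^ (-(s+1)))
              ≤ m * ((n:ℝ) + 1) ^ (m - 1) * δ := mul_le_mul_of_nonneg_left hδ_ge hB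
            _ ≤ m * u ^ (m - 1) * δ := by
                apply mul_le_mul_of_nonneg_right _ hδ0
                exact mul_le_mul_of_nonneg_left hum1 hm0.le
        exact hLn.trans (step1.trans (step2.le.trans step3))
      -- Bernoulli: u^m + m u^{m-1} δ ≤ (u+δ)^m
      have hbern : u ^ m + m * u ^ (m - 1) * δ ≤ (u + δ) ^ m := by
        have hb := one_add_mul_self_le_rpow_one_add (s := δ / u) (by linarith [div_nonneg hδ0 hu_pos.le] : (-1:ℝ) ≤ δ / u) (by linarith : 1 ≤ m)
        have hum_pos : 0 < u ^ m := Real.rpow_pos_of_pos hu_pos m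
        have hmul := mul_le_mul_of_nonneg_left hb hum_pos.le
        have heq1 : u ^ m * (1 + δ / u) ^ m = (u + δ) ^ m := by
          rw [← Real.mul_rpow hu_pos.le (by positivity)]
          congr 1
          field_simp
        have heq2 : u ^ m * (1 + m * (δ / u)) = u ^ m + m * u ^ (m - 1) * δ := by
          have hum : u ^ m = u ^ (m - 1) * u := by
            rw [← Real.rpow_add_one (ne_of_gt hu_pos)]
            congr 1; ring
          rw [hum]; field_simp
        rw [heq1, heq2] at hmul
        exact hmul
      -- conclude y ≤ (u+δ)^m
      have hy_le : y ≤ (u + δ) ^ m := by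
        rw [hy_def]
        calc Real.log K + γ * Real.log n + Real.log (b n)
            ≤ m * u ^ (m - 1) * δ + u ^ m := by
              linarith [h1, hmain]
          _ ≤ (u + δ) ^ m := by linarith [hbern]
      have hud0 : 0 ≤ u + δ := by linarith
      have hy_root : y ^ (1/m) ≤ u + δ := by
        have h := Real.rpow_le_rpow hyn hy_le (by positivity : (0:ℝ) ≤ 1/m)
        rwa [← Real.rpow_mul hud0, mul_one_div_cancel hmne, Real.rpow_one] at h
      rw [hlogbn1]
      push_cast
      have hRHS : β1 + Cm * G * (1 - ((n:ℕ)+1:ℝ) ^ (-s)) + (((n:ℕ)+1:ℝ) - 1)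
          = u + δ + 1 := by
        rw [hu_def, hδ_def]; push_cast; ring
      have : (y ^ (1/m) + 1) ^ m ≤ (u + δ + 1) ^ m :=
        Real.rpow_le_rpow hbase_nonneg (by linarith) hm0.le
      calc (y ^ (1/m) + 1) ^ m ≤ (u + δ + 1) ^ m := this
        _ = (β1 + Cm * G * (1 - ((n:ℕ)+1:ℝ) ^ (-s)) + (((n:ℕ)+1:ℝ) - 1)) ^ m := by
            rw [hRHS]
      -- done with step
  -- conclude
  intro n hn
  obtain ⟨hpos, h0, h1⟩ := key n hn
  have ha : (0:ℝ) ≤ β1 + Cm * G := by nlinarith [hβ1ge, hCm, hG]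
  have hiter := iterPhiM m hmne (n - 1) (β1 + Cm * G) ha
  have hcast : ((n - 1 : ℕ) : ℝ) = (n:ℝ) - 1 := by
    have : (1:ℕ) ≤ n := hn
    push_cast [this]
    ring
  rw [hiter, hcast]
  have hnR : (1:ℝ) ≤ (n:ℝ) := by exact_mod_cast hn
  have hns_le_one : (n:ℝ) ^ (-s) ≤ 1 :=
    Real.rpow_le_one_of_one_le_of_nonpos hnR (by linarith)
  have hns_nonneg : 0 ≤ (n:ℝ) ^ (-s) := Real.rpow_nonneg (by linarith) _
  have hCmGs : 0 ≤ Cm * G * ((n:ℝ) ^ (-s)) := by positivity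
  have hbase_le : β1 + Cm * G * (1 - (n:ℝ) ^ (-s)) + ((n:ℝ) - 1)
      ≤ β1 + Cm * G + ((n:ℝ) - 1) := by nlinarith
  have hbase_nonneg : (0:ℝ) ≤ β1 + Cm * G * (1 - (n:ℝ) ^ (-s)) + ((n:ℝ) - 1) := by
    have : 0 ≤ Cm * G * (1 - (n:ℝ) ^ (-s)) := mul_nonneg (by positivity) (by linarith)
    linarith
  calc b n = Real.exp (Real.log (b n)) := (Real.exp_log hpos).symm
    _ ≤ Real.exp ((β1 + Cm * G + ((n:ℝ) - 1)) ^ m) := by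
        apply Real.exp_le_exp.mpr
        exact le_trans h1 (Real.rpow_le_rpow hbase_nonneg hbase_le hm0.le)
end

section
/- Fix m > 2, K > 1, γ > 0 and b_1 ≥ e^{2^m}. Define β_1 = (ln b_1)^{1/m} and β_{n+1} = (β_n^m + ln(K n^γ))^{1/m} + 1. Then β_{n+1} ≥ β_1 + n for all n ≥ 1, and β_{n+1} ≤ β_1 + n + (1/m) Σ_{j=1}^n ln(K j^γ)/β_j^{m-1}. -/
lemma concave_rpow_aux (a c m : ℝ) (ha : 0 < a) (hc : 0 ≤ c) (hm : 1 ≤ m) :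
    (a ^ m + c) ^ (1 / m : ℝ) ≤ a + c / (m * a ^ (m - 1)) := by
  have hm0 : (0:ℝ) < m := lt_of_lt_of_le one_pos hm
  set t := c / (m * a ^ m) with ht
  have hampos : (0:ℝ) < a ^ m := Real.rpow_pos_of_pos ha m
  have ht0 : 0 ≤ t := div_nonneg hc (by positivity)
  have hber : 1 + m * t ≤ (1 + t) ^ m :=
    one_add_mul_self_le_rpow_one_add (by linarith) hm
  have h1 : a ^ m + c ≤ (a * (1 + t)) ^ m := by
    rw [Real.mul_rpow ha.le (by linarith)]
    have he : a ^ m + c = a ^ m * (1 + m * t) := by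
      rw [ht]; field_simp
    rw [he]
    exact mul_le_mul_of_nonneg_left hber hampos.le
  have h2 : (a ^ m + c) ^ (1 / m : ℝ) ≤ a * (1 + t) := by
    have h3 := Real.rpow_le_rpow (by positivity) h1 (by positivity : (0:ℝ) ≤ 1 / m)
    rwa [← Real.rpow_mul (by positivity), mul_one_div_cancel hm0.ne', Real.rpow_one] at h3
  have ham1 : a ^ (m - 1) * a = a ^ m := by
    have h := (Real.rpow_add ha (m - 1) 1).symm
    simpa using h
  have heq : a * (1 + t) = a + c / (m * a ^ (m - 1)) := by
    have hne : a ^ (m - 1) ≠ 0 := (Real.rpow_pos_of_pos ha _).ne'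
    rw [ht, ← ham1]
    field_simp
  linarith

/-- Core recursion estimate of the Moser iteration lemma: with
β₁ = (ln b₁)^{1/m} and β_{n+1} = (β_n^m + ln(K n^γ))^{1/m} + 1, one has
β₁ + n ≤ β_{n+1} ≤ β₁ + n + (1/m) Σ_{j=1}^n ln(K j^γ)/β_j^{m-1}. -/
theorem beta_recursion_bounds (m K γ b1 : ℝ) (hm : 2 < m) (hK : 1 < K) (hγ : 0 < γ)
    (hb1 : Real.exp ((2 : ℝ) ^ m) ≤ b1)
    (β : ℕ → ℝ) (hβ1 : β 1 = Real.log b1 ^ (1 / m))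
    (hrec : ∀ n : ℕ, 1 ≤ n →
      β (n + 1) = (β n ^ m + Real.log (K * (n : ℝ) ^ γ)) ^ (1 / m) + 1) :
    ∀ n : ℕ, 1 ≤ n →
      β 1 + n ≤ β (n + 1) ∧
      β (n + 1) ≤ β 1 + n +
        (1 / m) * ∑ j ∈ Finset.Icc 1 n, Real.log (K * (j : ℝ) ^ γ) / β j ^ (m - 1) := by
  have hm0 : (0:ℝ) < m := by linarith
  have hm1 : (1:ℝ) ≤ m := by linarith
  have hlog : ∀ n : ℕ, 1 ≤ n → 0 ≤ Real.log (K * (n : ℝ) ^ γ) := by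
    intro n hn
    apply Real.log_nonneg
    have h1 : (1:ℝ) ≤ (n:ℝ) := by exact_mod_cast hn
    have h2 : (1:ℝ) ≤ (n:ℝ) ^ γ := Real.one_le_rpow h1 hγ.le
    nlinarith
  have hlb1 : (2:ℝ) ^ m ≤ Real.log b1 := by
    have := Real.log_le_log (Real.exp_pos _) hb1
    rwa [Real.log_exp] at this
  have hβ1two : 2 ≤ β 1 := by
    rw [hβ1]
    calc (2:ℝ) = ((2:ℝ) ^ m) ^ (1 / m : ℝ) := by
          rw [← Real.rpow_mul (by norm_num), mul_one_div_cancel hm0.ne', Real.rpow_one]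
      _ ≤ _ := Real.rpow_le_rpow (by positivity) hlb1 (by positivity)
  -- per-step estimates
  have step : ∀ n : ℕ, 1 ≤ n → 0 < β n →
      β n + 1 ≤ β (n + 1) ∧
      β (n + 1) ≤ β n + 1 + (1 / m) * (Real.log (K * (n : ℝ) ^ γ) / β n ^ (m - 1)) := by
    intro n hn hβn
    have hc := hlog n hn
    constructor
    · rw [hrec n hn]
      have h1 : β n ^ m ≤ β n ^ m + Real.log (K * (n : ℝ) ^ γ) := by linarith
      have h2 := Real.rpow_le_rpow (by positivity) h1 (by positivity : (0:ℝ) ≤ 1 / m)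
      rw [← Real.rpow_mul hβn.le, mul_one_div_cancel hm0.ne', Real.rpow_one] at h2
      linarith
    · rw [hrec n hn]
      have h3 := concave_rpow_aux (β n) _ m hβn hc hm1
      have h4 : Real.log (K * (n : ℝ) ^ γ) / (m * β n ^ (m - 1))
          = (1 / m) * (Real.log (K * (n : ℝ) ^ γ) / β n ^ (m - 1)) := by
        rw [div_mul_eq_div_div_swap, div_div]
        ring
      linarith [h3, h4.le]
  intro n hn
  induction n, hn using Nat.le_induction with
  | base =>
    have hs := step 1 le_rfl (by linarith)
    simp only [Finset.Icc_self, Finset.sum_singleton, Nat.cast_one]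
    exact ⟨by linarith [hs.1], by linarith [hs.2]⟩
  | succ n hn ih =>
    obtain ⟨ihl, ihu⟩ := ih
    have hβpos : 0 < β (n + 1) := by
      have : (0:ℝ) ≤ (n:ℝ) := Nat.cast_nonneg n
      linarith
    have hs := step (n + 1) (by omega) hβpos
    rw [Finset.sum_Icc_succ_top (by omega : 1 ≤ n + 1)]
    have hterm : 0 ≤ (1 / m) * (Real.log (K * ((n+1 : ℕ) : ℝ) ^ γ) / β (n+1) ^ (m - 1)) := by
      have := hlog (n+1) (by omega)
      have hb : (0:ℝ) < β (n+1) ^ (m-1) := Real.rpow_pos_of_pos hβpos _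
      positivity
    push_cast
    push_cast at ihl ihu hs
    constructor
    · linarith [hs.1]
    · have := hs.2
      rw [mul_add]
      linarith
end

section
/- Let Ξ : [0,∞) → [0,∞) be strictly increasing with Ξ(0)=0 and Ξ([0,∞)) = [0,∞), satisfying: for all M > M_1 > 0, liminf_{j→∞} Ξ^{(j)}(M)/Ξ^{(j)}(M_1) = ∞, where Ξ^{(j)} is the j-fold composition. Let D ⋐ D_1 be nonempty bounded open sets in ℝⁿ with a nested sequence D_1 ⋑ D_2 ⋑ ⋯ ⋑ D, ∩_j D_j = closure(D). Let ω be a Borel measure on D_1 with ω(D_1) < ∞ such that Lebesgue measure is absolutely continuous with respect to ω. Then for any ω-measurable f on D_1: ‖f‖_{L^∞(D)} ≤ liminf_{j→∞} Ξ^{(-j)}(∫_{D_j} Ξ^{(j)}(|f|) dω). -/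
open MeasureTheory Filter

/-- Convergence of iterated Orlicz expressions to the L^∞ norm: if Ξ is strictly increasing
on [0,∞] with Ξ(0)=0, finite on finite values, with inverse Ψ, and iterates of Ξ separate
distinct positive values (liminf of ratios is ∞), then for nested bounded open sets
D_j shrinking to the closure of D and a finite Borel measure ω with Lebesgue ≪ ω,
‖f‖_{L^∞(D)} ≤ liminf_j Ξ^{(-j)}(∫_{D_j} Ξ^{(j)}(|f|) dω). -/
theorem liminf_iterates_ge_linf (n : ℕ) (Ξ Ψ : ENNReal → ENNReal)
    (hΞmono : StrictMono Ξ) (hΞ0 : Ξ 0 = 0)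
    (hΞfin : ∀ x : ENNReal, x ≠ ⊤ → Ξ x ≠ ⊤)
    (hΨΞ : ∀ x, Ψ (Ξ x) = x) (hΞΨ : ∀ x, Ξ (Ψ x) = x)
    (hgrow : ∀ M M1 : ENNReal, 0 < M1 → M1 < M → M ≠ ⊤ →
      Filter.liminf (fun j => Ξ^[j] M / Ξ^[j] M1) Filter.atTop = ⊤)
    (D : Set (Fin n → ℝ)) (Dj : ℕ → Set (Fin n → ℝ))
    (hDopen : IsOpen D) (hDne : D.Nonempty) (hDb : Bornology.IsBounded D)
    (hD1ne : (Dj 0).Nonempty)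
    (hDjopen : ∀ j, IsOpen (Dj j)) (hDjb : ∀ j, Bornology.IsBounded (Dj j))
    (hnest : ∀ j, closure (Dj (j + 1)) ⊆ Dj j)
    (hDsub : ∀ j, closure D ⊆ Dj j)
    (hinter : ⋂ j, Dj j = closure D)
    (ω : Measure (Fin n → ℝ)) (hωfin : ω (Dj 0) < ⊤)
    (hac : MeasureTheory.volume ≪ ω)
    (f : (Fin n → ℝ) → ℝ) (hf : Measurable f) :
    eLpNorm f ⊤ (MeasureTheory.volume.restrict D) ≤
      Filter.liminf
        (fun j => Ψ^[j] (∫⁻ x in Dj j, Ξ^[j] (ENNReal.ofReal |f x|) ∂ω))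
        Filter.atTop := by
  classical
  set g : (Fin n → ℝ) → ENNReal := fun x => ENNReal.ofReal |f x| with hg
  have hgmeas : Measurable g := ENNReal.measurable_ofReal.comp hf.abs
  -- rewrite eLpNorm as essSup of g
  have hL : eLpNorm f ⊤ (MeasureTheory.volume.restrict D)
      = essSup g (MeasureTheory.volume.restrict D) := by
    rw [eLpNorm_exponent_top, eLpNormEssSup]
    congr 1
    ext x
    exact Real.enorm_eq_ofReal_abs (f x)
  rw [hL]
  set L := essSup g (MeasureTheory.volume.restrict D) with hLdef
  -- monotonicity facts
  have hΨmono : Monotone Ψ := by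
    intro a b hab
    have := hΞmono.le_iff_le (a := Ψ a) (b := Ψ b)
    rw [hΞΨ, hΞΨ] at this
    exact this.mp hab
  -- prove via density
  refine le_of_forall_lt_imp_le_of_dense fun c hc => ?_
  rcases eq_or_lt_of_le (zero_le (a := c)) with hc0 | hc0
  · simp [← hc0]
  -- c ≠ ⊤
  have hcne : c ≠ ⊤ := fun h => (h ▸ hc).not_ge le_top
  obtain ⟨M1, hcM1, hM1L⟩ := exists_between hc
  have hM1ne : M1 ≠ ⊤ := fun h => (h ▸ hM1L).not_ge le_top
  -- the set where g > M1 has positive measure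
  set A : Set (Fin n → ℝ) := {x | M1 < g x} ∩ D with hA
  have hAmeas : MeasurableSet A :=
    (measurableSet_lt measurable_const hgmeas).inter hDopen.measurableSet
  have hvolA : MeasureTheory.volume A ≠ 0 := by
    intro h0
    have h0' : (MeasureTheory.volume.restrict D) {x | M1 < g x} = 0 := by
      rw [Measure.restrict_apply (measurableSet_lt measurable_const hgmeas)]
      exact h0
    have hae : ∀ᵐ x ∂(MeasureTheory.volume.restrict D), g x ≤ M1 := by
      rw [MeasureTheory.ae_iff]
      simpa [not_le] using h0'
    exact absurd (essSup_le_of_ae_le M1 hae) (not_le.mpr hM1L)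
  have hωA : ω A ≠ 0 := fun h => hvolA (hac h)
  have hAsub0 : A ⊆ Dj 0 := fun x hx => hDsub 0 (subset_closure hx.2)
  have hωAfin : ω A ≠ ⊤ := (lt_of_le_of_lt (measure_mono hAsub0) hωfin).ne
  -- positivity/finiteness of iterates
  have hiterpos : ∀ j, 0 < Ξ^[j] c := by
    intro j
    induction j with
    | zero => simpa using hc0
    | succ j ih =>
      rw [Function.iterate_succ_apply']
      calc 0 = Ξ 0 := hΞ0.symm
      _ < Ξ (Ξ^[j] c) := hΞmono ih
  have hiterfin : ∀ j, Ξ^[j] c ≠ ⊤ := by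
    intro j
    induction j with
    | zero => simpa using hcne
    | succ j ih =>
      rw [Function.iterate_succ_apply']
      exact hΞfin _ ih
  -- growth: eventually Ξ^[j] c ≤ Ξ^[j] M1 * ω A
  have hgrow' := hgrow M1 c hc0 hcM1 hM1ne
  have hev : ∀ᶠ j in atTop, Ξ^[j] c ≤ Ξ^[j] M1 * ω A := by
    have hlt : (ω A)⁻¹ < liminf (fun j => Ξ^[j] M1 / Ξ^[j] c) atTop := by
      rw [hgrow']
      exact ENNReal.inv_lt_top.mpr (pos_iff_ne_zero.mpr hωA)
    filter_upwards [eventually_lt_of_lt_liminf hlt] with j hj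
    have h1 : (ω A)⁻¹ * Ξ^[j] c ≤ Ξ^[j] M1 :=
      (ENNReal.le_div_iff_mul_le (Or.inl (hiterpos j).ne') (Or.inl (hiterfin j))).mp hj.le
    calc Ξ^[j] c = ω A * ((ω A)⁻¹ * Ξ^[j] c) := by
          rw [← mul_assoc, ENNReal.mul_inv_cancel hωA hωAfin, one_mul]
    _ ≤ ω A * Ξ^[j] M1 := mul_le_mul_right h1 _
    _ = Ξ^[j] M1 * ω A := mul_comm _ _
  -- lower bound on the integrals
  have hint : ∀ j, Ξ^[j] M1 * ω A ≤ ∫⁻ x in Dj j, Ξ^[j] (g x) ∂ω := by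
    intro j
    have hAsub : A ⊆ Dj j := fun x hx => hDsub j (subset_closure hx.2)
    calc Ξ^[j] M1 * ω A = ∫⁻ _ in A, Ξ^[j] M1 ∂ω := (setLIntegral_const A _).symm
    _ ≤ ∫⁻ x in A, Ξ^[j] (g x) ∂ω := by
        refine setLIntegral_mono' hAmeas fun x hx => ?_
        exact (hΞmono.monotone.iterate j) hx.1.le
    _ ≤ ∫⁻ x in Dj j, Ξ^[j] (g x) ∂ω := lintegral_mono_set hAsub
  -- conclude
  have hevc : ∀ᶠ j in atTop,
      c ≤ Ψ^[j] (∫⁻ x in Dj j, Ξ^[j] (ENNReal.ofReal |f x|) ∂ω) := by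
    filter_upwards [hev] with j hj
    calc c = Ψ^[j] (Ξ^[j] c) := ((Function.LeftInverse.iterate hΨΞ j) c).symm
    _ ≤ Ψ^[j] (Ξ^[j] M1 * ω A) := (hΨmono.iterate j) hj
    _ ≤ Ψ^[j] (∫⁻ x in Dj j, Ξ^[j] (g x) ∂ω) := (hΨmono.iterate j) (hint j)
  exact le_liminf_of_le (by isBoundedDefault) hevc
end

section
/- Let m > 1 and Φ_m(t) = exp(((ln t)^{1/m}+1)^m) for t > E = e^{2^m}, extended linearly to [0, E]. For any M > M_1 > 0, lim_{N→∞} Φ_m^{(N)}(M)/Φ_m^{(N)}(M_1) = ∞, where Φ_m^{(N)} is the N-fold composition. -/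
/-- Φ_m extended linearly on [0, e^{2^m}]: Φ_m(t) = exp(((ln t)^{1/m}+1)^m) for
t ≥ E = e^{2^m}, and Φ_m(t) = (Φ_m(E)/E) t = (e^{3^m}/e^{2^m}) t for t ≤ E. -/
noncomputable def PhiMExt (m : ℝ) (t : ℝ) : ℝ :=
  if Real.exp ((2 : ℝ) ^ m) ≤ t then Real.exp ((Real.log t ^ (1 / m) + 1) ^ m)
  else (Real.exp ((3 : ℝ) ^ m) / Real.exp ((2 : ℝ) ^ m)) * t

section
variable {m : ℝ} (hm : 1 < m)

lemma hm0 {m : ℝ} (hm : 1 < m) : (0:ℝ) < m := lt_trans one_pos hm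

include hm

-- (2^m)^(1/m) = 2
lemma two_pow_root : ((2:ℝ) ^ m) ^ (1/m) = 2 := by
  rw [← Real.rpow_mul (by norm_num), mul_one_div, div_self (hm0 hm).ne', Real.rpow_one]

lemma log_rpow_ge {t : ℝ} (ht : Real.exp ((2:ℝ) ^ m) ≤ t) :
    2 ≤ Real.log t ^ (1/m) := by
  have h1 : (2:ℝ)^m ≤ Real.log t := by
    rw [← Real.log_exp ((2:ℝ)^m)]
    exact Real.log_le_log (Real.exp_pos _) ht
  calc (2:ℝ) = ((2:ℝ)^m)^(1/m) := (two_pow_root hm).symm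
    _ ≤ Real.log t ^ (1/m) :=
      Real.rpow_le_rpow (Real.rpow_nonneg (by norm_num) _) h1 (by positivity)

lemma phi_ge_of_ge {t : ℝ} (ht : Real.exp ((2:ℝ) ^ m) ≤ t) :
    Real.exp ((3:ℝ)^m) ≤ PhiMExt m t := by
  rw [PhiMExt, if_pos ht]
  apply Real.exp_le_exp.2
  apply Real.rpow_le_rpow (by norm_num) _ (hm0 hm).le
  linarith [log_rpow_ge hm ht]

lemma E_le_expthree : Real.exp ((2:ℝ)^m) ≤ Real.exp ((3:ℝ)^m) :=
  Real.exp_le_exp.2 (Real.rpow_le_rpow (by norm_num) (by norm_num) (hm0 hm).le)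

lemma phi_mem {t : ℝ} (ht : Real.exp ((2:ℝ) ^ m) ≤ t) :
    Real.exp ((2:ℝ) ^ m) ≤ PhiMExt m t :=
  le_trans (E_le_expthree hm) (phi_ge_of_ge hm ht)

omit hm in
lemma phi_pos {t : ℝ} (ht : 0 < t) : 0 < PhiMExt m t := by
  rw [PhiMExt]; split
  · exact Real.exp_pos _
  · positivity

lemma phi_strictmono {t s : ℝ} (ht : 0 < t) (hts : t < s) :
    PhiMExt m t < PhiMExt m s := by
  have hE := Real.exp_pos ((2:ℝ)^m)
  have hc : (1:ℝ) < Real.exp ((3:ℝ)^m) / Real.exp ((2:ℝ)^m) := by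
    rw [lt_div_iff₀ hE, one_mul]
    exact Real.exp_lt_exp.2 (Real.rpow_lt_rpow (by norm_num) (by norm_num) (hm0 hm))
  by_cases h1 : Real.exp ((2:ℝ)^m) ≤ t
  · have h2 : Real.exp ((2:ℝ)^m) ≤ s := le_trans h1 hts.le
    rw [PhiMExt, if_pos h1, PhiMExt, if_pos h2]
    apply Real.exp_lt_exp.2
    have hlt : Real.log t < Real.log s := Real.log_lt_log ht hts
    have hlogt : (0:ℝ) ≤ Real.log t := by
      have : (0:ℝ) ≤ (2:ℝ)^m := Real.rpow_nonneg (by norm_num) _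
      have := Real.log_le_log (Real.exp_pos _) h1
      rw [Real.log_exp] at this; linarith
    have : Real.log t ^ (1/m) < Real.log s ^ (1/m) :=
      Real.rpow_lt_rpow hlogt hlt (by positivity)
    exact Real.rpow_lt_rpow (by positivity) (by linarith) (hm0 hm)
  · push_neg at h1
    by_cases h2 : Real.exp ((2:ℝ)^m) ≤ s
    · rw [PhiMExt, if_neg (not_le.2 h1)]
      calc Real.exp ((3:ℝ)^m) / Real.exp ((2:ℝ)^m) * t
          < Real.exp ((3:ℝ)^m) / Real.exp ((2:ℝ)^m) * Real.exp ((2:ℝ)^m) := by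
            apply mul_lt_mul_of_pos_left h1 (by positivity)
        _ = Real.exp ((3:ℝ)^m) := div_mul_cancel₀ _ hE.ne'
        _ ≤ PhiMExt m s := phi_ge_of_ge hm h2
    · rw [PhiMExt, if_neg (not_le.2 h1), PhiMExt, if_neg h2]
      exact mul_lt_mul_of_pos_left hts (by positivity)

lemma iter_pos (t : ℝ) (ht : 0 < t) (n : ℕ) : 0 < (PhiMExt m)^[n] t := by
  induction n with
  | zero => simpa
  | succ k ih => rw [Function.iterate_succ_apply']; exact phi_pos ih

lemma iter_strictmono {t s : ℝ} (ht : 0 < t) (hts : t < s) (n : ℕ) :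
    (PhiMExt m)^[n] t < (PhiMExt m)^[n] s := by
  induction n with
  | zero => simpa
  | succ k ih =>
    rw [Function.iterate_succ_apply', Function.iterate_succ_apply']
    exact phi_strictmono hm (iter_pos hm t ht k) ih

lemma reach (t : ℝ) (ht : 0 < t) : ∃ n, Real.exp ((2:ℝ)^m) ≤ (PhiMExt m)^[n] t := by
  set c := Real.exp ((3:ℝ)^m) / Real.exp ((2:ℝ)^m) with hcdef
  have hE := Real.exp_pos ((2:ℝ)^m)
  have hc : (1:ℝ) < c := by
    rw [hcdef, lt_div_iff₀ hE, one_mul]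
    exact Real.exp_lt_exp.2 (Real.rpow_lt_rpow (by norm_num) (by norm_num) (hm0 hm))
  have key : ∀ n, min (Real.exp ((2:ℝ)^m)) (c^n * t) ≤ (PhiMExt m)^[n] t := by
    intro n
    induction n with
    | zero => simpa using min_le_right _ _
    | succ k ih =>
      rw [Function.iterate_succ_apply']
      by_cases h : Real.exp ((2:ℝ)^m) ≤ (PhiMExt m)^[k] t
      · exact le_trans (min_le_left _ _) (phi_mem hm h)
      · push_neg at h
        have h2 : c ^ k * t ≤ (PhiMExt m)^[k] t := by
          rcases le_total (Real.exp ((2:ℝ)^m)) (c ^ k * t) with h3 | h3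
          · exact absurd (le_trans (by rw [min_eq_left h3]) ih) (not_le.2 h)
          · rwa [min_eq_right h3] at ih
        refine le_trans (min_le_right _ _) ?_
        rw [PhiMExt, if_neg (not_le.2 h), ← hcdef]
        rw [pow_succ, mul_comm (c^k) c, mul_assoc]
        exact mul_le_mul_of_nonneg_left h2 (by positivity)
  obtain ⟨n, hn⟩ := ((tendsto_pow_atTop_atTop_of_one_lt hc).atTop_mul_const ht).eventually_ge_atTop
    (Real.exp ((2:ℝ)^m)) |>.exists
  refine ⟨n, ?_⟩
  have := key n
  rwa [min_eq_left hn] at this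

end

section
variable {m : ℝ} (hm : 1 < m)
include hm

lemma iter_log {t : ℝ} (ht : Real.exp ((2:ℝ)^m) ≤ t) (n : ℕ) :
    (PhiMExt m)^[n] t = Real.exp ((Real.log t ^ (1/m) + n) ^ m) ∧
    Real.exp ((2:ℝ)^m) ≤ (PhiMExt m)^[n] t := by
  have ht0 : 0 < t := lt_of_lt_of_le (Real.exp_pos _) ht
  have ha2 : 2 ≤ Real.log t ^ (1/m) := log_rpow_ge hm ht
  induction n with
  | zero =>
    refine ⟨?_, by simpa using ht⟩
    have h1t : (1:ℝ) ≤ t :=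
      le_trans (Real.one_le_exp (Real.rpow_nonneg (by norm_num) _)) ht
    simp only [Function.iterate_zero_apply, Nat.cast_zero, add_zero]
    rw [← Real.rpow_mul (Real.log_nonneg h1t),
      one_div, inv_mul_cancel₀ (hm0 hm).ne', Real.rpow_one, Real.exp_log ht0]
  | succ k ih =>
    obtain ⟨ih1, ih2⟩ := ih
    refine ⟨?_, by rw [Function.iterate_succ_apply']; exact phi_mem hm ih2⟩
    rw [Function.iterate_succ_apply', PhiMExt, if_pos ih2, ih1, Real.log_exp,
      ← Real.rpow_mul (by positivity), mul_one_div, div_self (hm0 hm).ne', Real.rpow_one]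
    push_cast
    ring_nf

lemma iter_mem {t : ℝ} (ht : Real.exp ((2:ℝ)^m) ≤ t) (n : ℕ) :
    Real.exp ((2:ℝ)^m) ≤ (PhiMExt m)^[n] t := (iter_log hm ht n).2

end

/-- For m > 1 and M > M₁ > 0, the ratio Φ_m^{(N)}(M)/Φ_m^{(N)}(M₁) of N-fold
compositions tends to infinity. -/
theorem iterates_ratio_tendsto_atTop (m : ℝ) (hm : 1 < m) (M M1 : ℝ)
    (hM1 : 0 < M1) (hMM1 : M1 < M) :
    Filter.Tendsto (fun N : ℕ => (PhiMExt m)^[N] M / (PhiMExt m)^[N] M1)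
      Filter.atTop Filter.atTop := by
  have hM : 0 < M := lt_trans hM1 hMM1
  obtain ⟨n1, hn1⟩ := reach hm M1 hM1
  obtain ⟨n2, hn2⟩ := reach hm M hM
  set N0 := max n1 n2 with hN0
  have hv : Real.exp ((2:ℝ)^m) ≤ (PhiMExt m)^[N0] M1 := by
    have : N0 = (N0 - n1) + n1 := (Nat.sub_add_cancel (le_max_left _ _)).symm
    rw [this, Function.iterate_add_apply]
    exact iter_mem hm hn1 _
  have hu : Real.exp ((2:ℝ)^m) ≤ (PhiMExt m)^[N0] M := by
    have : N0 = (N0 - n2) + n2 := (Nat.sub_add_cancel (le_max_right _ _)).symm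
    rw [this, Function.iterate_add_apply]
    exact iter_mem hm hn2 _
  set u := (PhiMExt m)^[N0] M
  set v := (PhiMExt m)^[N0] M1
  have huv : v < u := iter_strictmono hm hM1 hMM1 N0
  have hv0 : 0 < v := lt_of_lt_of_le (Real.exp_pos _) hv
  set a := Real.log u ^ (1/m) with hadef
  set b := Real.log v ^ (1/m) with hbdef
  have hb2 : 2 ≤ b := log_rpow_ge hm hv
  have hlogv0 : 0 ≤ Real.log v := by
    have := Real.log_le_log (Real.exp_pos _) hv
    rw [Real.log_exp] at this
    exact le_trans (Real.rpow_nonneg (by norm_num) _) this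
  have hm0' : (0:ℝ) < m := hm0 hm
  have hab : b < a :=
    Real.rpow_lt_rpow hlogv0 (Real.log_lt_log hv0 huv) (by positivity)
  have hd : 0 < a - b := by linarith
  -- reduce to shifted sequence
  rw [← Filter.tendsto_add_atTop_iff_nat N0]
  have heq : ∀ N : ℕ, (PhiMExt m)^[N + N0] M / (PhiMExt m)^[N + N0] M1 =
      Real.exp ((a + N)^m - (b + N)^m) := by
    intro N
    rw [Function.iterate_add_apply, Function.iterate_add_apply,
      (iter_log hm hu N).1, (iter_log hm hv N).1, ← Real.exp_sub]
  simp only [heq]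
  apply Real.tendsto_exp_atTop.comp
  have hbound : ∀ N : ℕ, m * (a - b) * (b + N) ^ (m - 1) ≤ (a + N)^m - (b + N)^m := by
    intro N
    have hy : (2:ℝ) ≤ b + N := le_add_of_le_of_nonneg hb2 (Nat.cast_nonneg N)
    have hy0 : (0:ℝ) < b + N := by linarith
    have hx : a + N = (b + N) * (1 + (a - b)/(b + N)) := by
      field_simp
      ring
    have hbern : 1 + m * ((a - b)/(b + N)) ≤ (1 + (a - b)/(b + N)) ^ m :=
      one_add_mul_self_le_rpow_one_add
        (le_trans (by norm_num) (by positivity : (0:ℝ) ≤ (a - b)/(b + N))) hm.le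
    have hmul : (a + N) ^ m = (b + N) ^ m * (1 + (a - b)/(b + N)) ^ m := by
      rw [hx, Real.mul_rpow hy0.le (by positivity)]
    rw [hmul]
    have h1 : (b + N) ^ m * (1 + m * ((a - b)/(b + N))) ≤
        (b + N) ^ m * (1 + (a - b)/(b + N)) ^ m :=
      mul_le_mul_of_nonneg_left hbern (Real.rpow_nonneg hy0.le _)
    have h2 : (b + N) ^ m * (1 + m * ((a - b)/(b + N))) =
        (b + N) ^ m + m * (a - b) * (b + N) ^ (m - 1) := by
      rw [Real.rpow_sub hy0, Real.rpow_one]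
      field_simp
    linarith [h1, h2.symm.le]
  apply Filter.tendsto_atTop_mono hbound
  apply Filter.Tendsto.const_mul_atTop (by positivity : 0 < m * (a - b))
  exact (tendsto_rpow_atTop (by linarith : 0 < m - 1)).comp
    (Filter.tendsto_atTop_add_const_left _ b tendsto_natCast_atTop_atTop)
end

section
/- Let m > 1 and Φ(t) = exp(((ln t)^{1/m}+1)^m). Then Φ''(t) > 0 for all t ≥ e; i.e., Φ is convex on [e, ∞). -/
open Real

/-- `x ↦ x^(m-1) + ((m-1)/m) x⁻¹` is strictly increasing on `[1,∞)`. -/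
lemma phi_aux_key (m : ℝ) (hm : 1 < m) {u : ℝ} (hu : 1 ≤ u) :
    u ^ (m - 1) + (m - 1) / m * u⁻¹ < (u + 1) ^ (m - 1) + (m - 1) / m * (u + 1)⁻¹ := by
  have hm0 : (0:ℝ) < m := by linarith
  have hd : ∀ x : ℝ, 0 < x →
      HasDerivAt (fun x : ℝ => x ^ (m - 1) + (m - 1) / m * x⁻¹)
        ((m - 1) * x ^ (m - 1 - 1) + (m - 1) / m * -(x ^ 2)⁻¹) x := by
    intro x hx
    exact (Real.hasDerivAt_rpow_const (Or.inl hx.ne')).add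
      ((hasDerivAt_inv hx.ne').const_mul ((m - 1) / m))
  have hmono : StrictMonoOn (fun x : ℝ => x ^ (m - 1) + (m - 1) / m * x⁻¹) (Set.Ici 1) := by
    apply strictMonoOn_of_deriv_pos (convex_Ici 1)
    · intro x hx
      have hx0 : (0:ℝ) < x := lt_of_lt_of_le one_pos hx
      exact ((hd x hx0).continuousAt).continuousWithinAt
    · intro x hx
      rw [interior_Ici] at hx
      have hx1 : (1:ℝ) < x := hx
      have hx0 : (0:ℝ) < x := lt_trans one_pos hx1
      rw [(hd x hx0).deriv]
      have hb : (0:ℝ) < x ^ (2:ℕ) := by positivity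
      have hab : x ^ (m - 1 - 1) * x ^ (2:ℕ) = x ^ m := by
        rw [← Real.rpow_natCast x 2, ← Real.rpow_add hx0]
        congr 1
        push_cast
        ring
      have hxm : (1:ℝ) ≤ x ^ m := by
        rw [← Real.one_rpow m]
        exact Real.rpow_le_rpow zero_le_one hx1.le hm0.le
      have hc : x ^ (m - 1 - 1) = x ^ m * (x ^ (2:ℕ))⁻¹ := by
        field_simp [hab]
        exact hab
      rw [hc]
      have h3 : (m - 1) / m < (m - 1) * x ^ m := by
        have h4 : (m - 1) / m < m - 1 := by
          rw [div_lt_iff₀ hm0]; nlinarith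
        nlinarith
      have h5 := mul_pos (inv_pos.2 hb) (by linarith : (0:ℝ) < (m - 1) * x ^ m - (m - 1) / m)
      nlinarith [h5]
  exact hmono (Set.mem_Ici.2 hu) (Set.mem_Ici.2 (by linarith)) (lt_add_one u)

lemma phi_hasDeriv1 (m : ℝ) (hm : 1 < m) {s : ℝ} (hs : 1 < s) :
    HasDerivAt (fun s : ℝ => Real.exp ((Real.log s ^ (1 / m) + 1) ^ m))
      (Real.exp ((Real.log s ^ (1 / m) + 1) ^ m) *
        ((Real.log s ^ (1 / m) + 1) ^ (m - 1) * Real.log s ^ (1 / m - 1) * s⁻¹)) s := by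
  have hm0 : (0:ℝ) < m := by linarith
  have hs0 : (0:ℝ) < s := lt_trans one_pos hs
  have hL : (0:ℝ) < Real.log s := Real.log_pos hs
  have hu1 : (0:ℝ) < Real.log s ^ (1 / m) + 1 := by positivity
  have h1 : HasDerivAt Real.log s⁻¹ s := Real.hasDerivAt_log hs0.ne'
  have h2 := h1.rpow_const (p := 1 / m) (Or.inl hL.ne')
  have h3 := h2.add_const 1
  have h4 := h3.rpow_const (p := m) (Or.inl hu1.ne')
  have h5 := h4.exp
  convert h5 using 1
  field_simp

lemma phi_hasDeriv2 (m : ℝ) (hm : 1 < m) {t : ℝ} (ht : 1 < t) :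
    HasDerivAt (fun s : ℝ => Real.exp ((Real.log s ^ (1 / m) + 1) ^ m) *
        ((Real.log s ^ (1 / m) + 1) ^ (m - 1) * Real.log s ^ (1 / m - 1) * s⁻¹))
      (Real.exp ((Real.log t ^ (1 / m) + 1) ^ m) * (t⁻¹ * t⁻¹) *
        ((Real.log t ^ (1 / m) + 1) ^ (m - 1) * (Real.log t ^ (1 / m) + 1) ^ (m - 1) *
            Real.log t ^ (1 / m - 1) * Real.log t ^ (1 / m - 1)
          + (m - 1) / m * ((Real.log t ^ (1 / m) + 1) ^ (m - 2) *
              (Real.log t ^ (1 / m - 1) * Real.log t ^ (1 / m - 1)))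
          - (m - 1) / m * ((Real.log t ^ (1 / m) + 1) ^ (m - 1) * Real.log t ^ (1 / m - 2))
          - (Real.log t ^ (1 / m) + 1) ^ (m - 1) * Real.log t ^ (1 / m - 1))) t := by
  have hm0 : (0:ℝ) < m := by linarith
  have ht0 : (0:ℝ) < t := lt_trans one_pos ht
  have hL : (0:ℝ) < Real.log t := Real.log_pos ht
  have hu1 : (0:ℝ) < Real.log t ^ (1 / m) + 1 := by positivity
  have h1 : HasDerivAt Real.log t⁻¹ t := Real.hasDerivAt_log ht0.ne'
  have h2 := h1.rpow_const (p := 1 / m) (Or.inl hL.ne')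
  have h3 := h2.add_const 1
  have hA := h3.rpow_const (p := m - 1) (Or.inl hu1.ne')
  have hB := h1.rpow_const (p := 1 / m - 1) (Or.inl hL.ne')
  have hC := hasDerivAt_inv ht0.ne'
  have hΦ := phi_hasDeriv1 m hm ht
  have hG := (hA.mul hB).mul hC
  have hD := hΦ.mul hG
  convert hD using 1
  · rfl
  · rfl
  · rfl
  rw [show m - 1 - 1 = m - 2 by ring, show 1 / m - 1 - 1 = 1 / m - 2 by ring]
  simp only [Pi.mul_apply]
  field_simp
  ring

lemma phi_D2_pos (m : ℝ) (hm : 1 < m) {t : ℝ} (ht : Real.exp 1 ≤ t) :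
    0 < Real.exp ((Real.log t ^ (1 / m) + 1) ^ m) * (t⁻¹ * t⁻¹) *
        ((Real.log t ^ (1 / m) + 1) ^ (m - 1) * (Real.log t ^ (1 / m) + 1) ^ (m - 1) *
            Real.log t ^ (1 / m - 1) * Real.log t ^ (1 / m - 1)
          + (m - 1) / m * ((Real.log t ^ (1 / m) + 1) ^ (m - 2) *
              (Real.log t ^ (1 / m - 1) * Real.log t ^ (1 / m - 1)))
          - (m - 1) / m * ((Real.log t ^ (1 / m) + 1) ^ (m - 1) * Real.log t ^ (1 / m - 2))
          - (Real.log t ^ (1 / m) + 1) ^ (m - 1) * Real.log t ^ (1 / m - 1)) := by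
  have hm0 : (0:ℝ) < m := by linarith
  have ht0 : (0:ℝ) < t := lt_of_lt_of_le (Real.exp_pos 1) ht
  have hL1 : (1:ℝ) ≤ Real.log t := (Real.le_log_iff_exp_le ht0).2 ht
  have hL0 : (0:ℝ) < Real.log t := lt_of_lt_of_le one_pos hL1
  set L := Real.log t with hLdef
  set u := L ^ (1 / m) with hudef
  have hu1 : (1:ℝ) ≤ u := Real.one_le_rpow hL1 (by positivity)
  have hu0 : (0:ℝ) < u + 1 := by linarith
  set P1 := (u + 1) ^ (m - 1) with hP1
  set P2 := (u + 1) ^ (m - 2) with hP2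
  set L1 := L ^ (1 / m - 1) with hL1def
  set L2 := L ^ (1 / m - 2) with hL2def
  have hP1pos : 0 < P1 := Real.rpow_pos_of_pos hu0 _
  have hL1pos : 0 < L1 := Real.rpow_pos_of_pos hL0 _
  have eC : P1 * (u + 1)⁻¹ = P2 := by
    rw [hP1, hP2, show m - 2 = m - 1 + -1 by ring, Real.rpow_add hu0, Real.rpow_neg_one]
  have eA : L1 * L1 * u ^ (m - 1) = L1 := by
    rw [hudef, ← Real.rpow_mul hL0.le, hL1def, ← Real.rpow_add hL0, ← Real.rpow_add hL0]
    congr 1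
    field_simp
    ring
  have eB : L1 * L1 * u⁻¹ = L2 := by
    rw [hudef, ← Real.rpow_neg_one (L ^ (1 / m)), ← Real.rpow_mul hL0.le,
      hL1def, ← Real.rpow_add hL0, ← Real.rpow_add hL0, hL2def]
    congr 1
    field_simp
    ring
  have key := phi_aux_key m hm hu1
  have hc : 0 < P1 * (L1 * L1) := by positivity
  have hbr : 0 < P1 * P1 * L1 * L1
      + (m - 1) / m * (P2 * (L1 * L1))
      - (m - 1) / m * (P1 * L2) - P1 * L1 := by
    have hE : P1 * (L1 * L1) * (((u + 1) ^ (m - 1) + (m - 1) / m * (u + 1)⁻¹)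
          - (u ^ (m - 1) + (m - 1) / m * u⁻¹))
        = P1 * P1 * L1 * L1 + (m - 1) / m * (P2 * (L1 * L1))
          - (m - 1) / m * (P1 * L2) - P1 * L1 := by
      rw [← hP1]
      linear_combination ((m - 1) / m * (L1 * L1)) * eC - P1 * eA - ((m - 1) / m * P1) * eB
    rw [← hE]
    exact mul_pos hc (by linarith)
  have he : 0 < Real.exp ((u + 1) ^ m) * (t⁻¹ * t⁻¹) := by positivity
  exact mul_pos he hbr

/-- For m > 1, Φ_m(t) = exp(((ln t)^{1/m}+1)^m) has positive second derivative on
[e, ∞); in particular it is convex on [e, ∞). -/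
theorem phi_convex_on_Ici_e (m : ℝ) (hm : 1 < m) :
    (∀ t : ℝ, Real.exp 1 ≤ t →
        0 < iteratedDeriv 2 (fun s : ℝ => Real.exp ((Real.log s ^ (1 / m) + 1) ^ m)) t) ∧
      ConvexOn ℝ (Set.Ici (Real.exp 1))
        (fun s : ℝ => Real.exp ((Real.log s ^ (1 / m) + 1) ^ m)) := by
  set f : ℝ → ℝ := fun s : ℝ => Real.exp ((Real.log s ^ (1 / m) + 1) ^ m) with hf
  set D1 : ℝ → ℝ := fun s : ℝ => Real.exp ((Real.log s ^ (1 / m) + 1) ^ m) *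
      ((Real.log s ^ (1 / m) + 1) ^ (m - 1) * Real.log s ^ (1 / m - 1) * s⁻¹) with hD1
  have he1 : (1:ℝ) < Real.exp 1 := by
    linarith [Real.exp_one_gt_d9]
  have hev : ∀ t : ℝ, 1 < t → deriv f =ᶠ[nhds t] D1 := by
    intro t ht
    filter_upwards [isOpen_Ioi.mem_nhds ht] with s hs
    exact (phi_hasDeriv1 m hm hs).deriv
  have hderiv2 : ∀ t : ℝ, 1 < t → HasDerivAt (deriv f)
      (Real.exp ((Real.log t ^ (1 / m) + 1) ^ m) * (t⁻¹ * t⁻¹) *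
        ((Real.log t ^ (1 / m) + 1) ^ (m - 1) * (Real.log t ^ (1 / m) + 1) ^ (m - 1) *
            Real.log t ^ (1 / m - 1) * Real.log t ^ (1 / m - 1)
          + (m - 1) / m * ((Real.log t ^ (1 / m) + 1) ^ (m - 2) *
              (Real.log t ^ (1 / m - 1) * Real.log t ^ (1 / m - 1)))
          - (m - 1) / m * ((Real.log t ^ (1 / m) + 1) ^ (m - 1) * Real.log t ^ (1 / m - 2))
          - (Real.log t ^ (1 / m) + 1) ^ (m - 1) * Real.log t ^ (1 / m - 1))) t := by
    intro t ht
    exact (phi_hasDeriv2 m hm ht).congr_of_eventuallyEq (hev t ht)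
  have hpos : ∀ t : ℝ, Real.exp 1 ≤ t → 0 < deriv (deriv f) t := by
    intro t ht
    have ht1 : (1:ℝ) < t := lt_of_lt_of_le he1 ht
    rw [(hderiv2 t ht1).deriv]
    exact phi_D2_pos m hm ht
  have hit : ∀ t : ℝ, iteratedDeriv 2 f t = deriv (deriv f) t := by
    intro t
    rw [show (2:ℕ) = 1 + 1 from rfl, iteratedDeriv_succ, iteratedDeriv_one]
  constructor
  · intro t ht
    rw [hit t]
    exact hpos t ht
  · apply convexOn_of_deriv2_nonneg (convex_Ici _)
    · intro x hx
      have hx1 : (1:ℝ) < x := lt_of_lt_of_le he1 hx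
      exact ((phi_hasDeriv1 m hm hx1).continuousAt).continuousWithinAt
    · intro x hx
      rw [interior_Ici] at hx
      have hx1 : (1:ℝ) < x := lt_trans he1 hx
      exact (phi_hasDeriv1 m hm hx1).differentiableAt.differentiableWithinAt
    · intro x hx
      rw [interior_Ici] at hx
      have hx1 : (1:ℝ) < x := lt_trans he1 hx
      exact (hderiv2 x hx1).differentiableAt.differentiableWithinAt
    · intro x hx
      rw [interior_Ici] at hx
      have : deriv^[2] f x = deriv (deriv f) x := by
        simp [Function.iterate_succ, Function.iterate_zero]
      rw [this]
      exact (hpos x (le_of_lt hx)).le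
end

section
/- Let h : (0,∞) → (0,∞) be twice differentiable with h, h', h'' > 0 satisfying: (i) h(t)h''(t) ≤ (h'(t))², and (ii) 1 ≤ t h'(t)/h(t) ≤ L for some L ≥ 1. For β ≥ 1 or β < 0, define h_β(t) = h(t^β). Then h_β''(t) ≥ 0 and, with Υ_β(t) = h_β(t)h_β''(t) + (h_β'(t))², one has 1 ≤ Υ_β(t)/(h_β'(t))² ≤ 2 + |β−1|/|β|, and |β| ≤ t|h_β'(t)|/h_β(t) ≤ L|β| for all t > 0. -/
set_option maxHeartbeats 1000000


/-- Power composition estimates: if h > 0 is twice differentiable on (0,∞) with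
h' > 0, h'' > 0, h h'' ≤ (h')², and 1 ≤ t h'/h ≤ L, then for β < 0 or β ≥ 1 the
function h_β(t) = h(t^β) is convex with 1 ≤ Υ_β/(h_β')² ≤ 2 + |β−1|/|β| and
|β| ≤ t |h_β'|/h_β ≤ L |β| on (0,∞). -/
theorem power_composition_estimates (h h' h'' : ℝ → ℝ) (L : ℝ) (hL : 1 ≤ L)
    (hd1 : ∀ t : ℝ, 0 < t → HasDerivAt h (h' t) t)
    (hd2 : ∀ t : ℝ, 0 < t → HasDerivAt h' (h'' t) t)
    (hpos : ∀ t : ℝ, 0 < t → 0 < h t)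
    (hpos' : ∀ t : ℝ, 0 < t → 0 < h' t)
    (hpos'' : ∀ t : ℝ, 0 < t → 0 < h'' t)
    (hup : ∀ t : ℝ, 0 < t → h t * h'' t ≤ (h' t) ^ 2)
    (hlow : ∀ t : ℝ, 0 < t → 1 ≤ t * h' t / h t)
    (hhi : ∀ t : ℝ, 0 < t → t * h' t / h t ≤ L)
    (β : ℝ) (hβ : β < 0 ∨ 1 ≤ β) :
    ∀ t : ℝ, 0 < t →
      0 ≤ iteratedDeriv 2 (fun s : ℝ => h (s ^ β)) t ∧
      (1 ≤ ((fun s : ℝ => h (s ^ β)) t * iteratedDeriv 2 (fun s : ℝ => h (s ^ β)) t +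
              (deriv (fun s : ℝ => h (s ^ β)) t) ^ 2) /
            (deriv (fun s : ℝ => h (s ^ β)) t) ^ 2 ∧
        ((fun s : ℝ => h (s ^ β)) t * iteratedDeriv 2 (fun s : ℝ => h (s ^ β)) t +
              (deriv (fun s : ℝ => h (s ^ β)) t) ^ 2) /
            (deriv (fun s : ℝ => h (s ^ β)) t) ^ 2 ≤ 2 + |β - 1| / |β|) ∧
      (|β| ≤ t * |deriv (fun s : ℝ => h (s ^ β)) t| / h (t ^ β) ∧
        t * |deriv (fun s : ℝ => h (s ^ β)) t| / h (t ^ β) ≤ L * |β|) := by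
  have hβ0 : β ≠ 0 := by
    rcases hβ with hb | hb
    · exact ne_of_lt hb
    · exact ne_of_gt (lt_of_lt_of_le one_pos hb)
  have hββ : 0 ≤ β * (β - 1) := by rcases hβ with hb | hb <;> nlinarith
  -- first derivative on (0,∞)
  have key : ∀ s : ℝ, 0 < s →
      HasDerivAt (fun s : ℝ => h (s ^ β)) (β * (s ^ (β - 1) * h' (s ^ β))) s := by
    intro s hs
    have hpow : HasDerivAt (fun x : ℝ => x ^ β) (β * s ^ (β - 1)) s :=
      Real.hasDerivAt_rpow_const (Or.inl hs.ne')
    have h2 := (hd1 _ (Real.rpow_pos_of_pos hs β)).comp s hpow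
    have h3 : HasDerivAt (fun x : ℝ => h (x ^ β))
        (h' (s ^ β) * (β * s ^ (β - 1))) s := h2
    rw [show h' (s ^ β) * (β * s ^ (β - 1)) = β * (s ^ (β - 1) * h' (s ^ β)) by ring] at h3
    exact h3
  intro t ht
  have hu : (0:ℝ) < t ^ β := Real.rpow_pos_of_pos ht β
  have hp : (0:ℝ) < t ^ (β - 1) := Real.rpow_pos_of_pos ht _
  have hq : (0:ℝ) < t ^ (β - 2) := Real.rpow_pos_of_pos ht _
  have hD : deriv (fun s : ℝ => h (s ^ β)) t = β * (t ^ (β - 1) * h' (t ^ β)) :=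
    (key t ht).deriv
  have hev : deriv (fun s : ℝ => h (s ^ β)) =ᶠ[nhds t]
      fun s => β * (s ^ (β - 1) * h' (s ^ β)) := by
    filter_upwards [Ioi_mem_nhds ht] with s hs using (key s hs).deriv
  have hpowt : HasDerivAt (fun x : ℝ => x ^ β) (β * t ^ (β - 1)) t :=
    Real.hasDerivAt_rpow_const (Or.inl ht.ne')
  have hG : HasDerivAt (fun s : ℝ => β * (s ^ (β - 1) * h' (s ^ β)))
      (β * ((β - 1) * t ^ (β - 2) * h' (t ^ β)
        + t ^ (β - 1) * (h'' (t ^ β) * (β * t ^ (β - 1))))) t := by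
    have h1 : HasDerivAt (fun s : ℝ => s ^ (β - 1)) ((β - 1) * t ^ (β - 2)) t := by
      have := Real.hasDerivAt_rpow_const (x := t) (p := β - 1) (Or.inl ht.ne')
      rwa [show β - 1 - 1 = β - 2 by ring] at this
    have h2 : HasDerivAt (fun s : ℝ => h' (s ^ β)) (h'' (t ^ β) * (β * t ^ (β - 1))) t :=
      (hd2 _ hu).comp t hpowt
    exact (h1.mul h2).const_mul β
  have hS : iteratedDeriv 2 (fun s : ℝ => h (s ^ β)) t
      = β * ((β - 1) * t ^ (β - 2) * h' (t ^ β)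
        + t ^ (β - 1) * (h'' (t ^ β) * (β * t ^ (β - 1)))) := by
    rw [show (2:ℕ) = 1 + 1 from rfl, iteratedDeriv_succ, iteratedDeriv_one,
      hev.deriv_eq, hG.deriv]
  -- power identities
  have hup1 : t ^ (β - 1) * t = t ^ β := by
    rw [Real.rpow_sub ht, Real.rpow_one, div_mul_cancel₀ _ ht.ne']
  have hqp : t ^ (β - 2) * t = t ^ (β - 1) := by
    rw [show β - 2 = β - 1 - 1 by ring, Real.rpow_sub ht (β - 1) 1, Real.rpow_one,
      div_mul_cancel₀ _ ht.ne']
  set u := t ^ β with hudef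
  set p := t ^ (β - 1) with hpdef
  set q := t ^ (β - 2) with hqdef
  have hpp : p * p = q * u := by rw [← hup1, ← hqp]; ring
  have ha : (0:ℝ) < h u := hpos u hu
  have hb : (0:ℝ) < h' u := hpos' u hu
  have hc : (0:ℝ) < h'' u := hpos'' u hu
  have hacb : h u * h'' u ≤ (h' u) ^ 2 := hup u hu
  have hab : h u ≤ u * h' u := (one_le_div ha).mp (hlow u hu)
  have habL : u * h' u ≤ L * h u := by
    have := hhi u hu
    rw [div_le_iff₀ ha] at this
    linarith
  have hSnn : 0 ≤ β * ((β - 1) * q * h' u + p * (h'' u * (β * p))) := by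
    nlinarith [mul_nonneg hββ (mul_pos hq hb).le,
      mul_nonneg (mul_nonneg (sq_nonneg β) (mul_pos hp hp).le) hc.le]
  have hDne : β * (p * h' u) ≠ 0 := mul_ne_zero hβ0 (mul_pos hp hb).ne'
  have hD2 : (0:ℝ) < (β * (p * h' u)) ^ 2 := pow_two_pos_of_ne_zero hDne
  have hrnn : 0 ≤ (β - 1) / β := by
    rcases hβ with hb | hb
    · exact div_nonneg_iff.mpr (Or.inr ⟨by linarith, by linarith⟩)
    · exact div_nonneg (by linarith) (by linarith)
  have habs : |β - 1| / |β| = (β - 1) / β := by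
    rw [← abs_div, abs_of_nonneg hrnn]
  have hr : (β - 1) / β * β = β - 1 := div_mul_cancel₀ _ hβ0
  simp only [hD, hS]
  rw [← hudef, habs]
  refine ⟨hSnn, ⟨?_, ?_⟩, ?_, ?_⟩
  · rw [le_div_iff₀ hD2, one_mul]
    nlinarith [mul_nonneg ha.le hSnn]
  · rw [div_le_iff₀ hD2]
    have e1 : (β - 1) / β * (β * (p * h' u)) ^ 2 = (β - 1) * β * (q * u) * (h' u) ^ 2 := by
      linear_combination (β * p * p * (h' u) ^ 2) * hr + ((β - 1) * β * (h' u) ^ 2) * hpp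
    nlinarith [e1,
      mul_nonneg (mul_nonneg (sq_nonneg β) (mul_pos hp hp).le) (sub_nonneg.2 hacb),
      mul_nonneg hββ (mul_nonneg (mul_pos hq hb).le (sub_nonneg.2 hab))]
  · rw [abs_mul, abs_of_pos (mul_pos hp hb), le_div_iff₀ ha]
    have hab2 : h u ≤ p * t * h' u := by rw [hup1]; exact hab
    nlinarith [mul_le_mul_of_nonneg_left hab2 (abs_nonneg β)]
  · rw [abs_mul, abs_of_pos (mul_pos hp hb), div_le_iff₀ ha]
    have habL2 : p * t * h' u ≤ L * h u := by rw [hup1]; exact habL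
    nlinarith [mul_le_mul_of_nonneg_left habL2 (abs_nonneg β)]
end
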